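/- arXiv:1406.4466 — 3 statements merged into one kernel-verified Lean document; each statement's English description precedes it below -/
import Mathlib

section
/- Let G be a connected bipartite simple graph with vertex set {1,...,n} and bipartition ({1,...,r},{r+1,...,n}). Let s_1,...,s_n and a_e ≤ b_e (for e ∈ E(G)) be integers. Then there exist integers x_e with a_e ≤ x_e ≤ b_e (for e ∈ E(G)) such that Σ_{i=1}^n s_i f_i = Σ_{e∈E(G)} x_e v(e), if and only if: (1) s_1 + ⋯ + s_r = s_{r+1} + ⋯ + s_n; and (2) for all sets I ⊆ {1,...,r} and J ⊆ {r+1,...,n} such that the induced subgraph of G on I ∪ J and the induced subgraph of G on ({1,...,r}\I) ∪ ({r+1,...,n}\J) are connected, one has Σ_{i∈I} s_i − Σ_{j∈J} s_j ≤ Σ_{e=ij, i∈I, j∉J} b_e − Σ_{e=ij, i∉I, j∈J} a_e, where the sums on the right run over edges e = ij of G with i ∈ {1,...,r} and j ∈ {r+1,...,n}. -/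
open scoped Classical

noncomputable section

/-- The column `v(e) = f_i + f_j` (over ℤ) of the incidence matrix corresponding to an
edge `e = ij`. -/
def edgeVecZ {n : ℕ} (e : Sym2 (Fin n)) : Fin n → ℤ := fun k => if k ∈ e then 1 else 0

namespace GRaux

open Finset

variable {V : Type*}

/-- Linked within a set `A`: reflexive-transitive closure of adjacency restricted to `A`. -/
def Linked (G : SimpleGraph V) (A : Set V) : V → V → Prop :=
  Relation.ReflTransGen (fun x y => G.Adj x y ∧ x ∈ A ∧ y ∈ A)

lemma Linked.mono {G : SimpleGraph V} {A B : Set V} (h : A ⊆ B) {x y : V}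
    (hxy : Linked G A x y) : Linked G B x y :=
  Relation.ReflTransGen.mono (r := fun x y => G.Adj x y ∧ x ∈ A ∧ y ∈ A)
    (p := fun x y => G.Adj x y ∧ x ∈ B ∧ y ∈ B)
    (fun a b hab => (⟨hab.1, h hab.2.1, h hab.2.2⟩ : G.Adj a b ∧ a ∈ B ∧ b ∈ B)) _ _ hxy

lemma Linked.symm {G : SimpleGraph V} {A : Set V} {x y : V} (h : Linked G A x y) :
    Linked G A y x :=
  haveI : Std.Symm (fun x y => G.Adj x y ∧ x ∈ A ∧ y ∈ A) :=
    ⟨fun _ _ hab => ⟨hab.1.symm, hab.2.2, hab.2.1⟩⟩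
  (Relation.ReflTransGen.symmetric (r := fun x y => G.Adj x y ∧ x ∈ A ∧ y ∈ A)).symm _ _ h

lemma Linked.trans {G : SimpleGraph V} {A : Set V} {x y z : V} (h : Linked G A x y)
    (h' : Linked G A y z) : Linked G A x z :=
  Relation.ReflTransGen.trans h h'

lemma Linked.mem_right {G : SimpleGraph V} {A : Set V} {x y : V} (h : Linked G A x y)
    (hx : x ∈ A) : y ∈ A := by
  rcases Relation.ReflTransGen.cases_tail h with h' | ⟨c, _, hc⟩
  · exact h' ▸ hx
  · exact hc.2.2

lemma Linked.restrict {G : SimpleGraph V} {A U : Set V}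
    (hcl : ∀ x ∈ U, ∀ y ∈ A, G.Adj x y → y ∈ U) {x y : V} (h : Linked G A x y)
    (hx : x ∈ U) : Linked G U x y := by
  revert hx
  induction h using Relation.ReflTransGen.head_induction_on with
  | refl => intro _; exact .refl
  | @head a c hac hcb ih =>
      intro ha
      have hc : c ∈ U := hcl a ha c hac.2.2 hac.1
      exact (ih hc).head ⟨hac.1, ha, hc⟩

lemma attach_lemma {G : SimpleGraph V} (hconn : G.Connected) {S : Set V} {s0 : V}
    (hs0 : s0 ∈ S) {w : V} (hw : w ∉ S) :
    ∃ c z, Linked G Sᶜ w c ∧ G.Adj c z ∧ z ∈ S := by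
  have hreach := hconn.preconnected w s0
  rw [SimpleGraph.reachable_iff_reflTransGen] at hreach
  revert hw
  induction hreach using Relation.ReflTransGen.head_induction_on with
  | refl => intro hw; exact absurd hs0 hw
  | @head a c hac hcb ih =>
      intro ha
      by_cases hcS : c ∈ S
      · exact ⟨a, c, .refl, hac, hcS⟩
      · obtain ⟨c', z, h1, h2, h3⟩ := ih hcS
        exact ⟨c', z, Relation.ReflTransGen.head ⟨hac, ha, hcS⟩ h1, h2, h3⟩

lemma linked_of_induce {G : SimpleGraph V} {A : Set V} (h : (G.induce A).Connected)
    {x y : V} (hx : x ∈ A) (hy : y ∈ A) : Linked G A x y := by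
  have hr := h.preconnected ⟨x, hx⟩ ⟨y, hy⟩
  rw [SimpleGraph.reachable_iff_reflTransGen] at hr
  exact Relation.ReflTransGen.lift (r := (G.induce A).Adj)
    (p := fun x y => G.Adj x y ∧ x ∈ A ∧ y ∈ A) (Subtype.val)
    (fun (a b : A) (hab : (G.induce A).Adj a b) =>
      (⟨hab, a.2, b.2⟩ : G.Adj a.1 b.1 ∧ a.1 ∈ A ∧ b.1 ∈ A)) _ _ hr

lemma induce_of_linked {G : SimpleGraph V} {A : Set V} (hne : A.Nonempty)
    (h : ∀ x ∈ A, ∀ y ∈ A, Linked G A x y) : (G.induce A).Connected := by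
  rw [SimpleGraph.connected_iff]
  refine ⟨?_, hne.to_subtype⟩
  rintro ⟨x, hx⟩ ⟨y, hy⟩
  rw [SimpleGraph.reachable_iff_reflTransGen]
  have hxy := h x hx y hy
  clear h
  revert hx
  induction hxy using Relation.ReflTransGen.head_induction_on with
  | refl => intro hx; exact .refl
  | @head a c hac hcb ih =>
      intro ha
      exact Relation.ReflTransGen.head
        (show (G.induce A).Adj ⟨a, ha⟩ ⟨c, hac.2.2⟩ from hac.1) (ih hac.2.2)


section Cut

variable [Fintype V] [DecidableEq V] {E : Type*} [Fintype E]

/-- The slack of the cut determined by `S`. -/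
def cutF (u v : E → V) (t : V → ℤ) (a b : E → ℤ) (S : Finset V) : ℤ :=
  (∑ e : E, if u e ∈ S ∧ v e ∉ S then b e else 0)
    - (∑ e : E, if u e ∉ S ∧ v e ∈ S then a e else 0)
    - ∑ i ∈ S, t i

lemma cutF_empty (u v : E → V) (t : V → ℤ) (a b : E → ℤ) : cutF u v t a b ∅ = 0 := by
  simp [cutF]

lemma cutF_univ (u v : E → V) (t : V → ℤ) (a b : E → ℤ) (ht : ∑ i, t i = 0) :
    cutF u v t a b univ = 0 := by
  simp [cutF, ht]

lemma cutF_eq_sub (u v : E → V) (t : V → ℤ) (a b : E → ℤ) (S : Finset V) :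
    cutF u v t a b S =
      (∑ e : E, ((if u e ∈ S ∧ v e ∉ S then b e else 0)
        - (if u e ∉ S ∧ v e ∈ S then a e else 0))) - ∑ i ∈ S, t i := by
  rw [cutF, Finset.sum_sub_distrib]

/-- The total slack across the cut `S` (both directions). -/
def crossW (u v : E → V) (a b : E → ℤ) (S : Finset V) : ℤ :=
  ∑ e : E, (if (u e ∈ S ∧ v e ∉ S) ∨ (u e ∉ S ∧ v e ∈ S) then b e - a e else 0)

lemma cutF_add_compl (u v : E → V) (t : V → ℤ) (a b : E → ℤ) (ht : ∑ i, t i = 0)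
    (S : Finset V) :
    cutF u v t a b S + cutF u v t a b Sᶜ = crossW u v a b S := by
  have hlin : ∑ i ∈ S, t i + ∑ i ∈ Sᶜ, t i = 0 := by
    rw [Finset.sum_add_sum_compl]; exact ht
  have hsum : (∑ e : E, (if u e ∈ S ∧ v e ∉ S then b e else 0))
      - (∑ e : E, (if u e ∉ S ∧ v e ∈ S then a e else 0))
      + ((∑ e : E, (if u e ∈ Sᶜ ∧ v e ∉ Sᶜ then b e else 0))
      - (∑ e : E, (if u e ∉ Sᶜ ∧ v e ∈ Sᶜ then a e else 0)))
      = crossW u v a b S := by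
    rw [crossW, ← Finset.sum_sub_distrib, ← Finset.sum_sub_distrib, ← Finset.sum_add_distrib]
    refine Finset.sum_congr rfl fun e _ => ?_
    by_cases h1 : u e ∈ S <;> by_cases h2 : v e ∈ S <;> simp [h1, h2] <;> ring
  rw [cutF, cutF]
  linarith [hsum, hlin]

lemma cutF_union_of_split (u v : E → V) (t : V → ℤ) (a b : E → ℤ)
    {S1 S2 : Finset V} (hd : Disjoint S1 S2)
    (hcr : ∀ e : E, ¬(u e ∈ S1 ∧ v e ∈ S2) ∧ ¬(u e ∈ S2 ∧ v e ∈ S1)) :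
    cutF u v t a b (S1 ∪ S2) = cutF u v t a b S1 + cutF u v t a b S2 := by
  have hdl := Finset.disjoint_left.mp hd
  have h1 : ∀ e : E, (if u e ∈ S1 ∪ S2 ∧ v e ∉ S1 ∪ S2 then b e else 0)
      = (if u e ∈ S1 ∧ v e ∉ S1 then b e else 0) + (if u e ∈ S2 ∧ v e ∉ S2 then b e else 0) := by
    intro e
    have hc1 := (hcr e).1
    have hc2 := (hcr e).2
    by_cases hu1 : u e ∈ S1 <;> by_cases hu2 : u e ∈ S2 <;>
      by_cases hv1 : v e ∈ S1 <;> by_cases hv2 : v e ∈ S2 <;>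
      simp_all [Finset.mem_union]
  have h2 : ∀ e : E, (if u e ∉ S1 ∪ S2 ∧ v e ∈ S1 ∪ S2 then a e else 0)
      = (if u e ∉ S1 ∧ v e ∈ S1 then a e else 0) + (if u e ∉ S2 ∧ v e ∈ S2 then a e else 0) := by
    intro e
    have hc1 := (hcr e).1
    have hc2 := (hcr e).2
    by_cases hu1 : u e ∈ S1 <;> by_cases hu2 : u e ∈ S2 <;>
      by_cases hv1 : v e ∈ S1 <;> by_cases hv2 : v e ∈ S2 <;>
      simp_all [Finset.mem_union]
  have hlin : ∑ i ∈ S1 ∪ S2, t i = ∑ i ∈ S1, t i + ∑ i ∈ S2, t i := Finset.sum_union hd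
  rw [cutF, cutF, cutF, Finset.sum_congr rfl fun e _ => h1 e,
    Finset.sum_congr rfl fun e _ => h2 e, Finset.sum_add_distrib, Finset.sum_add_distrib, hlin]
  ring

lemma uncross (u v : E → V) (t : V → ℤ) (a b : E → ℤ) (hab : ∀ e, a e ≤ b e)
    (H : ∀ S : Finset V, 0 ≤ cutF u v t a b S) (e0 : E) (hlt : a e0 < b e0)
    (S1 S2 : Finset V) (h1 : cutF u v t a b S1 = 0) (h2 : cutF u v t a b S2 = 0)
    (hu1 : u e0 ∈ S1) (hv1 : v e0 ∉ S1) (hu2 : u e0 ∉ S2) (hv2 : v e0 ∈ S2) : False := by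
  set g : E → Finset V → ℤ := fun e S => (if u e ∈ S ∧ v e ∉ S then b e else 0)
    - (if u e ∉ S ∧ v e ∈ S then a e else 0) with hg
  have hsub : ∀ e : E, 0 ≤ g e S1 + g e S2 - g e (S1 ∩ S2) - g e (S1 ∪ S2) := by
    intro e
    by_cases p1 : u e ∈ S1 <;> by_cases p2 : u e ∈ S2 <;> by_cases q1 : v e ∈ S1 <;>
      by_cases q2 : v e ∈ S2 <;>
      simp [hg, Finset.mem_inter, Finset.mem_union, p1, p2, q1, q2] <;> linarith [hab e]
  have he0 : b e0 - a e0 ≤ g e0 S1 + g e0 S2 - g e0 (S1 ∩ S2) - g e0 (S1 ∪ S2) := by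
    simp [hg, Finset.mem_inter, Finset.mem_union, hu1, hu2, hv1, hv2]
  have hs : b e0 - a e0 ≤ ∑ e : E, (g e S1 + g e S2 - g e (S1 ∩ S2) - g e (S1 ∪ S2)) := by
    have := Finset.single_le_sum (f := fun e => g e S1 + g e S2 - g e (S1 ∩ S2) - g e (S1 ∪ S2))
      (fun e _ => hsub e) (Finset.mem_univ e0)
    linarith
  have hlin : ∑ i ∈ S1 ∪ S2, t i + ∑ i ∈ S1 ∩ S2, t i = ∑ i ∈ S1, t i + ∑ i ∈ S2, t i :=
    Finset.sum_union_inter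
  have hF : cutF u v t a b S1 + cutF u v t a b S2
      - cutF u v t a b (S1 ∩ S2) - cutF u v t a b (S1 ∪ S2)
      = ∑ e : E, (g e S1 + g e S2 - g e (S1 ∩ S2) - g e (S1 ∪ S2)) := by
    have e1 := cutF_eq_sub u v t a b S1
    have e2 := cutF_eq_sub u v t a b S2
    have e3 := cutF_eq_sub u v t a b (S1 ∩ S2)
    have e4 := cutF_eq_sub u v t a b (S1 ∪ S2)
    have hsplit : ∑ e : E, (g e S1 + g e S2 - g e (S1 ∩ S2) - g e (S1 ∪ S2))
        = (∑ e : E, g e S1) + (∑ e : E, g e S2) - (∑ e : E, g e (S1 ∩ S2))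
          - (∑ e : E, g e (S1 ∪ S2)) := by
      rw [Finset.sum_sub_distrib, Finset.sum_sub_distrib, Finset.sum_add_distrib]
    rw [hsplit]
    simp only [hg] at e1 e2 e3 e4 ⊢
    linarith
  have hi := H (S1 ∩ S2)
  have hu := H (S1 ∪ S2)
  linarith

lemma sum_ite_update (c : E → ℤ) (e0 : E) (w : ℤ) (P : E → Prop) [DecidablePred P] :
    (∑ e : E, if P e then Function.update c e0 w e else 0)
      = (∑ e : E, if P e then c e else 0) + (if P e0 then w - c e0 else 0) := by
  rw [Finset.sum_eq_sum_sdiff_singleton_add (Finset.mem_univ e0),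
    Finset.sum_eq_sum_sdiff_singleton_add (Finset.mem_univ e0)
      (fun e => if P e then c e else 0)]
  have h1 : ∀ e ∈ Finset.univ \ {e0},
      (if P e then Function.update c e0 w e else 0) = (if P e then c e else 0) := by
    intro e he
    rw [Finset.mem_sdiff, Finset.mem_singleton] at he
    rw [Function.update_of_ne he.2]
  rw [Finset.sum_congr rfl h1, Function.update_self]
  by_cases hP : P e0 <;> simp [hP] <;> ring


lemma hoffman_eq (u v : E → V) (t : V → ℤ) (a : E → ℤ) (ht : ∑ i, t i = 0)
    (H : ∀ S : Finset V, 0 ≤ cutF u v t a a S) :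
    ∀ k, t k = ∑ e : E, a e * ((if u e = k then 1 else 0) - (if v e = k then 1 else 0)) := by
  intro k
  have h0 : cutF u v t a a {k} = 0 := by
    have h1 := H {k}
    have h2 := H {k}ᶜ
    have h3 := cutF_add_compl u v t a a ht {k}
    have h4 : crossW u v a a {k} = 0 := by
      rw [crossW]
      refine Finset.sum_eq_zero fun e _ => ?_
      split <;> ring
    linarith
  rw [cutF] at h0
  simp only [Finset.mem_singleton, Finset.sum_singleton] at h0
  have hper : ∀ e : E, a e * ((if u e = k then 1 else 0) - (if v e = k then 1 else 0))
      = (if u e = k ∧ ¬ v e = k then a e else 0) - (if ¬ u e = k ∧ v e = k then a e else 0) := by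
    intro e
    by_cases h1 : u e = k <;> by_cases h2 : v e = k <;> simp [h1, h2]
  rw [Finset.sum_congr rfl fun e _ => hper e, Finset.sum_sub_distrib]
  linarith

lemma hoffman (u v : E → V) (t : V → ℤ) (ht : ∑ i, t i = 0) :
    ∀ (N : ℕ) (a b : E → ℤ), (∀ e, a e ≤ b e) → (∀ S : Finset V, 0 ≤ cutF u v t a b S) →
      (∑ e : E, (b e - a e).toNat) ≤ N →
      ∃ x : E → ℤ, (∀ e, a e ≤ x e ∧ x e ≤ b e) ∧
        ∀ k, t k = ∑ e : E, x e * ((if u e = k then 1 else 0) - (if v e = k then 1 else 0)) := by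
  intro N
  induction N with
  | zero =>
      intro a b hab H hN
      have hba : b = a := by
        funext e
        have hsum0 : ∑ e : E, (b e - a e).toNat = 0 := Nat.le_zero.mp hN
        have hz := Finset.sum_eq_zero_iff.mp hsum0 e (Finset.mem_univ e)
        have := hab e
        omega
      have H' : ∀ S : Finset V, 0 ≤ cutF u v t a a S := fun S => hba ▸ H S
      exact ⟨a, fun e => ⟨le_refl _, hab e⟩, hoffman_eq u v t a ht H'⟩
  | succ N ih =>
      intro a b hab H hN
      by_cases hall : ∀ e, b e = a e
      · have hba : b = a := funext hall
        have H' : ∀ S : Finset V, 0 ≤ cutF u v t a a S := fun S => hba ▸ H S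
        exact ⟨a, fun e => ⟨le_refl _, hab e⟩, hoffman_eq u v t a ht H'⟩
      · push_neg at hall
        obtain ⟨e0, hne⟩ := hall
        have hlt : a e0 < b e0 := lt_of_le_of_ne (hab e0) (fun h => hne h.symm)
        by_cases hex : ∃ S : Finset V, cutF u v t a b S = 0 ∧ u e0 ∈ S ∧ v e0 ∉ S
        · -- raise a at e0
          set a' := Function.update a e0 (a e0 + 1) with ha'
          have haa' : ∀ e, a e ≤ a' e := by
            intro e
            by_cases h : e = e0
            · subst h; rw [ha', Function.update_self]; omega
            · rw [ha', Function.update_of_ne h]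
          have hab' : ∀ e, a' e ≤ b e := by
            intro e
            by_cases h : e = e0
            · subst h; rw [ha', Function.update_self]; omega
            · rw [ha', Function.update_of_ne h]; exact hab e
          have hcut : ∀ S : Finset V, cutF u v t a' b S
              = cutF u v t a b S - (if u e0 ∉ S ∧ v e0 ∈ S then 1 else 0) := by
            intro S
            rw [cutF, cutF, ha', sum_ite_update a e0 (a e0 + 1) (fun e => u e ∉ S ∧ v e ∈ S)]
            split <;> ring
          have H' : ∀ S : Finset V, 0 ≤ cutF u v t a' b S := by
            intro S
            rw [hcut S]
            by_cases hcr : u e0 ∉ S ∧ v e0 ∈ S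
            · have h0 : cutF u v t a b S ≠ 0 := by
                intro h0
                obtain ⟨S1, hS1, hu1, hv1⟩ := hex
                exact uncross u v t a b hab H e0 hlt S1 S hS1 h0 hu1 hv1 hcr.1 hcr.2
              have := H S
              rw [if_pos hcr]
              omega
            · rw [if_neg hcr]
              have := H S
              omega
          have hm : (∑ e : E, (b e - a' e).toNat) ≤ N := by
            have hlt' : ∑ e : E, (b e - a' e).toNat < ∑ e : E, (b e - a e).toNat := by
              refine Finset.sum_lt_sum (fun e _ => ?_) ⟨e0, Finset.mem_univ e0, ?_⟩
              · have h1 := haa' e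
                omega
              · rw [ha', Function.update_self]
                omega
            omega
          obtain ⟨x, hx, hxeq⟩ := ih a' b hab' H' hm
          exact ⟨x, fun e => ⟨le_trans (haa' e) (hx e).1, (hx e).2⟩, hxeq⟩
        · -- lower b at e0
          push_neg at hex
          set b' := Function.update b e0 (b e0 - 1) with hb'
          have hbb' : ∀ e, b' e ≤ b e := by
            intro e
            by_cases h : e = e0
            · subst h; rw [hb', Function.update_self]; omega
            · rw [hb', Function.update_of_ne h]
          have hab' : ∀ e, a e ≤ b' e := by
            intro e
            by_cases h : e = e0
            · subst h; rw [hb', Function.update_self]; omega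
            · rw [hb', Function.update_of_ne h]; exact hab e
          have hcut : ∀ S : Finset V, cutF u v t a b' S
              = cutF u v t a b S - (if u e0 ∈ S ∧ v e0 ∉ S then 1 else 0) := by
            intro S
            rw [cutF, cutF, hb', sum_ite_update b e0 (b e0 - 1) (fun e => u e ∈ S ∧ v e ∉ S)]
            split <;> ring
          have H' : ∀ S : Finset V, 0 ≤ cutF u v t a b' S := by
            intro S
            rw [hcut S]
            by_cases hcr : u e0 ∈ S ∧ v e0 ∉ S
            · have h0 : cutF u v t a b S ≠ 0 := fun h0 => hcr.2 (hex S h0 hcr.1)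
              have := H S
              rw [if_pos hcr]
              omega
            · rw [if_neg hcr]
              have := H S
              omega
          have hm : (∑ e : E, (b' e - a e).toNat) ≤ N := by
            have hlt' : ∑ e : E, (b' e - a e).toNat < ∑ e : E, (b e - a e).toNat := by
              refine Finset.sum_lt_sum (fun e _ => ?_) ⟨e0, Finset.mem_univ e0, ?_⟩
              · have h1 := hbb' e
                omega
              · rw [hb', Function.update_self]
                omega
            omega
          obtain ⟨x, hx, hxeq⟩ := ih a b' hab' H' hm
          exact ⟨x, fun e => ⟨(hx e).1, le_trans (hx e).2 (hbb' e)⟩, hxeq⟩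

end Cut


section Reduce

variable [Fintype V] [DecidableEq V] {G : SimpleGraph V}

def LconnOn (G : SimpleGraph V) (S : Finset V) : Prop :=
  ∀ x ∈ (S : Set V), ∀ y ∈ (S : Set V), Linked G (S : Set V) x y

omit [Fintype V] in
lemma split_lemma (u v : G.edgeSet → V) (hadj : ∀ e : G.edgeSet, G.Adj (u e) (v e))
    {S : Finset V} {u0 v0 : V} (hu0 : u0 ∈ S) (hv0 : v0 ∈ S)
    (hnl : ¬ Linked G (S : Set V) u0 v0) :
    ∃ C D : Finset V, C ∪ D = S ∧ Disjoint C D ∧ u0 ∈ C ∧ v0 ∈ D ∧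
      (∀ e : G.edgeSet, ¬(u e ∈ C ∧ v e ∈ D) ∧ ¬(u e ∈ D ∧ v e ∈ C)) ∧
      (∀ x ∈ C, ∀ y ∈ S, G.Adj x y → y ∈ C) ∧ (∀ x ∈ D, ∀ y ∈ S, G.Adj x y → y ∈ D) := by
  classical
  set C := S.filter (fun w => Linked G (S : Set V) u0 w) with hCdef
  set D := S.filter (fun w => ¬ Linked G (S : Set V) u0 w) with hDdef
  have hclC : ∀ x ∈ C, ∀ y ∈ S, G.Adj x y → y ∈ C := by
    intro x hx y hy hxy
    rw [hCdef, Finset.mem_filter] at hx ⊢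
    exact ⟨hy, hx.2.tail ⟨hxy, Finset.mem_coe.mpr hx.1, Finset.mem_coe.mpr hy⟩⟩
  have hclD : ∀ x ∈ D, ∀ y ∈ S, G.Adj x y → y ∈ D := by
    intro x hx y hy hxy
    rw [hDdef, Finset.mem_filter] at hx ⊢
    exact ⟨hy, fun hl => hx.2
      (hl.tail ⟨hxy.symm, Finset.mem_coe.mpr hy, Finset.mem_coe.mpr hx.1⟩)⟩
  have hdis : Disjoint C D := Finset.disjoint_filter_filter_not S S _
  have hcross : ∀ e : G.edgeSet, ¬(u e ∈ C ∧ v e ∈ D) ∧ ¬(u e ∈ D ∧ v e ∈ C) := by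
    intro e
    constructor
    · rintro ⟨h1, h2⟩
      have hv : v e ∈ C := hclC _ h1 _ (Finset.mem_of_mem_filter _ h2) (hadj e)
      exact (Finset.disjoint_left.mp hdis hv) h2
    · rintro ⟨h1, h2⟩
      have hu : u e ∈ C := hclC _ h2 _ (Finset.mem_of_mem_filter _ h1) (hadj e).symm
      exact (Finset.disjoint_left.mp hdis hu) h1
  exact ⟨C, D, Finset.filter_union_filter_not_eq _ S, hdis,
    Finset.mem_filter.mpr ⟨hu0, .refl⟩, Finset.mem_filter.mpr ⟨hv0, hnl⟩, hcross, hclC, hclD⟩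

omit [Fintype V] in
lemma lconn_union_closed (hconn : G.Connected) {S W : Finset V} (hne : S.Nonempty)
    (hS : LconnOn G S) (hWS : ∀ w ∈ W, w ∉ S)
    (hcl : ∀ x ∈ W, ∀ y : V, y ∉ S → G.Adj x y → y ∈ W) :
    LconnOn G (S ∪ W) := by
  have hsub : (S : Set V) ⊆ ((S ∪ W : Finset V) : Set V) := by
    intro z hz; rw [Finset.coe_union]; exact Or.inl hz
  have hWsub : (W : Set V) ⊆ ((S ∪ W : Finset V) : Set V) := by
    intro z hz; rw [Finset.coe_union]; exact Or.inr hz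
  have key : ∀ w ∈ W, ∃ z ∈ S, Linked G ((S ∪ W : Finset V) : Set V) w z := by
    intro w hw
    obtain ⟨s0, hs0⟩ := hne
    obtain ⟨c, z, hlink, hadj', hz⟩ := attach_lemma hconn (S := (S : Set V))
      (Finset.mem_coe.mpr hs0) (fun h => hWS w hw (Finset.mem_coe.mp h))
    have hres : Linked G (W : Set V) w c := by
      refine hlink.restrict ?_ (Finset.mem_coe.mpr hw)
      intro x hx y hy hxy
      exact Finset.mem_coe.mpr
        (hcl x (Finset.mem_coe.mp hx) y (fun h => hy (Finset.mem_coe.mpr h)) hxy)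
    have hcW : c ∈ W := Finset.mem_coe.mp (hres.mem_right (Finset.mem_coe.mpr hw))
    refine ⟨z, Finset.mem_coe.mp hz, ?_⟩
    exact (hres.mono hWsub).tail ⟨hadj', hWsub (Finset.mem_coe.mpr hcW), hsub hz⟩
  have reach : ∀ p ∈ ((S ∪ W : Finset V) : Set V),
      ∃ z ∈ S, Linked G ((S ∪ W : Finset V) : Set V) p z := by
    intro p hp
    rw [Finset.coe_union] at hp
    rcases hp with hp | hp
    · exact ⟨p, Finset.mem_coe.mp hp, .refl⟩
    · exact key p (Finset.mem_coe.mp hp)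
  intro x hx y hy
  obtain ⟨zx, hzx, lx⟩ := reach x hx
  obtain ⟨zy, hzy, ly⟩ := reach y hy
  have mid : Linked G ((S ∪ W : Finset V) : Set V) zx zy :=
    (hS zx (Finset.mem_coe.mpr hzx) zy (Finset.mem_coe.mpr hzy)).mono hsub
  exact (lx.trans mid).trans ly.symm

lemma allCuts [Fintype ↥G.edgeSet] (hconn : G.Connected) (u v : G.edgeSet → V)
    (hadj : ∀ e : G.edgeSet, G.Adj (u e) (v e))
    (t : V → ℤ) (a b : G.edgeSet → ℤ) (ht : ∑ i, t i = 0)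
    (H2 : ∀ S : Finset V, S.Nonempty → Sᶜ.Nonempty → LconnOn G S → LconnOn G Sᶜ →
      0 ≤ cutF u v t a b S) :
    ∀ S : Finset V, 0 ≤ cutF u v t a b S := by
  have connCase : ∀ (k : ℕ) (S : Finset V), Sᶜ.card ≤ k → S.Nonempty → LconnOn G S →
      0 ≤ cutF u v t a b S := by
    intro k
    induction k with
    | zero =>
        intro S hk hne hl
        have hSc : Sᶜ = ∅ := Finset.card_eq_zero.mp (Nat.le_zero.mp hk)
        have hSu : S = Finset.univ := by rwa [Finset.compl_eq_empty_iff] at hSc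
        rw [hSu, cutF_univ u v t a b ht]
    | succ k ih =>
        intro S hk hne hl
        rcases Finset.eq_empty_or_nonempty Sᶜ with hSc | hScne
        · have hSu : S = Finset.univ := by rwa [Finset.compl_eq_empty_iff] at hSc
          rw [hSu, cutF_univ u v t a b ht]
        by_cases hlc : LconnOn G Sᶜ
        · exact H2 S hne hScne hl hlc
        · simp only [LconnOn] at hlc
          push_neg at hlc
          obtain ⟨u0, hu0, v0, hv0, hnl⟩ := hlc
          obtain ⟨C, D, hCD, hdis, hu0C, hv0D, hcross, hclC, hclD⟩ :=
            split_lemma u v hadj (Finset.mem_coe.mp hu0) (Finset.mem_coe.mp hv0) hnl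
          have hdl := Finset.disjoint_left.mp hdis
          have hCsub : C ⊆ Sᶜ := hCD ▸ Finset.subset_union_left
          have hDsub : D ⊆ Sᶜ := hCD ▸ Finset.subset_union_right
          have hpart : ∀ x, x ∈ Sᶜ ↔ x ∈ C ∨ x ∈ D := fun x => by
            rw [← hCD, Finset.mem_union]
          have htri : ∀ x, (x ∈ S ∧ x ∉ C ∧ x ∉ D) ∨ (x ∈ C ∧ x ∉ S ∧ x ∉ D)
              ∨ (x ∈ D ∧ x ∉ S ∧ x ∉ C) := by
            intro x
            by_cases hx : x ∈ S
            · exact Or.inl ⟨hx, fun h => (Finset.mem_compl.mp (hCsub h)) hx,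
                fun h => (Finset.mem_compl.mp (hDsub h)) hx⟩
            · rcases (hpart x).mp (Finset.mem_compl.mpr hx) with h | h
              · exact Or.inr (Or.inl ⟨h, hx, hdl h⟩)
              · exact Or.inr (Or.inr ⟨h, hx, fun hC => hdl hC h⟩)
          -- connectivity of S ∪ C and S ∪ D
          have hlSC : LconnOn G (S ∪ C) :=
            lconn_union_closed hconn hne hl
              (fun w hw => Finset.mem_compl.mp (hCsub hw))
              (fun x hx y hy hxy => hclC x hx y (Finset.mem_compl.mpr hy) hxy)
          have hlSD : LconnOn G (S ∪ D) :=
            lconn_union_closed hconn hne hl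
              (fun w hw => Finset.mem_compl.mp (hDsub hw))
              (fun x hx y hy hxy => hclD x hx y (Finset.mem_compl.mpr hy) hxy)
          -- complements
          have hUC : (S ∪ C)ᶜ = D := by
            ext x
            rw [Finset.mem_compl, Finset.mem_union]
            rcases htri x with ⟨a1, a2, a3⟩ | ⟨a1, a2, a3⟩ | ⟨a1, a2, a3⟩ <;>
              constructor <;> intro hx <;> tauto
          have hUD : (S ∪ D)ᶜ = C := by
            ext x
            rw [Finset.mem_compl, Finset.mem_union]
            rcases htri x with ⟨a1, a2, a3⟩ | ⟨a1, a2, a3⟩ | ⟨a1, a2, a3⟩ <;>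
              constructor <;> intro hx <;> tauto
          -- cardinalities
          have hClt : C.card < Sᶜ.card := Finset.card_lt_card
            ((Finset.ssubset_iff_of_subset hCsub).mpr
              ⟨v0, hDsub hv0D, fun h => hdl h hv0D⟩)
          have hDlt : D.card < Sᶜ.card := Finset.card_lt_card
            ((Finset.ssubset_iff_of_subset hDsub).mpr
              ⟨u0, hCsub hu0C, fun h => hdl hu0C h⟩)
          obtain ⟨s0, hs0⟩ := hne
          have hFC : 0 ≤ cutF u v t a b (S ∪ C) :=
            ih (S ∪ C) (by rw [hUC]; omega) ⟨s0, Finset.mem_union_left _ hs0⟩ hlSC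
          have hFD : 0 ≤ cutF u v t a b (S ∪ D) :=
            ih (S ∪ D) (by rw [hUD]; omega) ⟨s0, Finset.mem_union_left _ hs0⟩ hlSD
          -- cross weights
          have h5 : crossW u v a b (S ∪ C) + crossW u v a b (S ∪ D) = crossW u v a b S := by
            rw [crossW, crossW, crossW, ← Finset.sum_add_distrib]
            refine Finset.sum_congr rfl fun e _ => ?_
            rcases htri (u e) with ⟨a1, a2, a3⟩ | ⟨a1, a2, a3⟩ | ⟨a1, a2, a3⟩ <;>
              rcases htri (v e) with ⟨b1, b2, b3⟩ | ⟨b1, b2, b3⟩ | ⟨b1, b2, b3⟩ <;>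
              simp only [Finset.mem_union]
            · simp [a1, a2, a3, b1, b2, b3]
            · simp [a1, a2, a3, b1, b2, b3]
            · simp [a1, a2, a3, b1, b2, b3]
            · simp [a1, a2, a3, b1, b2, b3]
            · simp [a1, a2, a3, b1, b2, b3]
            · exact absurd ⟨a1, b1⟩ (hcross e).1
            · simp [a1, a2, a3, b1, b2, b3]
            · exact absurd ⟨a1, b1⟩ (hcross e).2
            · simp [a1, a2, a3, b1, b2, b3]
          have hA := cutF_add_compl u v t a b ht S
          have hB := cutF_add_compl u v t a b ht (S ∪ C)
          have hCc := cutF_add_compl u v t a b ht (S ∪ D)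
          rw [hUC] at hB
          rw [hUD] at hCc
          have hsplitc : cutF u v t a b Sᶜ = cutF u v t a b C + cutF u v t a b D := by
            rw [← hCD]; exact cutF_union_of_split u v t a b hdis hcross
          linarith
  have main : ∀ (k : ℕ) (S : Finset V), S.card ≤ k → 0 ≤ cutF u v t a b S := by
    intro k
    induction k with
    | zero =>
        intro S hk
        have hS0 : S = ∅ := Finset.card_eq_zero.mp (Nat.le_zero.mp hk)
        rw [hS0, cutF_empty]
    | succ k ih =>
        intro S hk
        rcases Finset.eq_empty_or_nonempty S with rfl | hne
        · rw [cutF_empty]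
        by_cases hl : LconnOn G S
        · exact connCase Sᶜ.card S le_rfl hne hl
        · simp only [LconnOn] at hl
          push_neg at hl
          obtain ⟨u0, hu0, v0, hv0, hnl⟩ := hl
          obtain ⟨C, D, hCD, hdis, hu0C, hv0D, hcross, _, _⟩ :=
            split_lemma u v hadj (Finset.mem_coe.mp hu0) (Finset.mem_coe.mp hv0) hnl
          have hdl := Finset.disjoint_left.mp hdis
          have hsplit : cutF u v t a b S = cutF u v t a b C + cutF u v t a b D := by
            rw [← hCD]; exact cutF_union_of_split u v t a b hdis hcross
          have hCsub : C ⊆ S := hCD ▸ Finset.subset_union_left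
          have hDsub : D ⊆ S := hCD ▸ Finset.subset_union_right
          have hClt : C.card < S.card := Finset.card_lt_card
            ((Finset.ssubset_iff_of_subset hCsub).mpr ⟨v0, hDsub hv0D, fun h => hdl h hv0D⟩)
          have hDlt : D.card < S.card := Finset.card_lt_card
            ((Finset.ssubset_iff_of_subset hDsub).mpr ⟨u0, hCsub hu0C, fun h => hdl hu0C h⟩)
          have h1 := ih C (by omega)
          have h2 := ih D (by omega)
          linarith
  intro S
  exact main S.card S le_rfl

end Reduce

end GRaux

open GRaux in
/-- **Theorem 4.3** (generalized Gale–Ryser): for a connected bipartite graph `G` with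
bipartition `({i | i < r}, {i | i ≥ r})`, integers `s_i` and `a_e ≤ b_e`, there exist
integers `a_e ≤ x_e ≤ b_e` with `∑ s_i f_i = ∑ x_e v(e)` iff conditions (1) and (2)
hold. -/
theorem bipartite_gale_ryser {n : ℕ} (r : ℕ) (hr : r ≤ n)
    (G : SimpleGraph (Fin n)) (hconn : G.Connected)
    (hbip : ∀ i j : Fin n, G.Adj i j → ((i : ℕ) < r ↔ ¬ (j : ℕ) < r))
    (s : Fin n → ℤ) (a b : G.edgeSet → ℤ) (hab : ∀ e, a e ≤ b e) :
    (∃ x : G.edgeSet → ℤ, (∀ e, a e ≤ x e ∧ x e ≤ b e) ∧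
        s = ∑ e : G.edgeSet, x e • edgeVecZ (e : Sym2 (Fin n))) ↔
      ((∑ i ∈ Finset.univ.filter (fun i : Fin n => (i : ℕ) < r), s i =
          ∑ i ∈ Finset.univ.filter (fun i : Fin n => ¬ (i : ℕ) < r), s i) ∧
        ∀ I J : Finset (Fin n), (∀ i ∈ I, (i : ℕ) < r) → (∀ j ∈ J, ¬ (j : ℕ) < r) →
          (G.induce ((I : Set (Fin n)) ∪ (J : Set (Fin n)))).Connected →
          (G.induce (({k : Fin n | (k : ℕ) < r} \ (I : Set (Fin n))) ∪
            ({k : Fin n | ¬ (k : ℕ) < r} \ (J : Set (Fin n))))).Connected →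
          ∑ i ∈ I, s i - ∑ j ∈ J, s j ≤
            (∑ e : G.edgeSet,
              if (∃ i ∈ (e : Sym2 (Fin n)), (i : ℕ) < r ∧ i ∈ I) ∧
                 (∃ j ∈ (e : Sym2 (Fin n)), ¬ (j : ℕ) < r ∧ j ∉ J) then b e else 0) -
            (∑ e : G.edgeSet,
              if (∃ i ∈ (e : Sym2 (Fin n)), (i : ℕ) < r ∧ i ∉ I) ∧
                 (∃ j ∈ (e : Sym2 (Fin n)), ¬ (j : ℕ) < r ∧ j ∈ J) then a e else 0)) := by
  have hend : ∀ e : G.edgeSet, ∃ p : Fin n × Fin n,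
      (e : Sym2 (Fin n)) = s(p.1, p.2) ∧ (p.1 : ℕ) < r ∧ ¬ (p.2 : ℕ) < r := by
    rintro ⟨e, he⟩
    revert he
    refine Sym2.ind (fun i j => ?_) e
    intro he
    have hadj : G.Adj i j := G.mem_edgeSet.mp he
    by_cases hi : (i : ℕ) < r
    · exact ⟨(i, j), rfl, hi, (hbip i j hadj).mp hi⟩
    · have hj : (j : ℕ) < r := by
        by_contra hj
        exact hi ((hbip i j hadj).mpr hj)
      exact ⟨(j, i), Sym2.eq_swap, hj, hi⟩
  set uE : G.edgeSet → Fin n := fun e => (hend e).choose.1 with huE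
  set vE : G.edgeSet → Fin n := fun e => (hend e).choose.2 with hvE
  have hspec : ∀ e : G.edgeSet, (e : Sym2 (Fin n)) = s(uE e, vE e) :=
    fun e => (hend e).choose_spec.1
  have hu_lt : ∀ e, (uE e : ℕ) < r := fun e => (hend e).choose_spec.2.1
  have hv_lt : ∀ e, ¬ (vE e : ℕ) < r := fun e => (hend e).choose_spec.2.2
  have hadjE : ∀ e : G.edgeSet, G.Adj (uE e) (vE e) :=
    fun e => G.mem_edgeSet.mp (hspec e ▸ e.2)
  have hmem : ∀ (e : G.edgeSet) (k : Fin n),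
      k ∈ (e : Sym2 (Fin n)) ↔ k = uE e ∨ k = vE e := by
    intro e k; rw [hspec e, Sym2.mem_iff]
  have hexL : ∀ (e : G.edgeSet) (P : Fin n → Prop),
      (∃ i ∈ (e : Sym2 (Fin n)), (i : ℕ) < r ∧ P i) ↔ P (uE e) := by
    intro e P
    constructor
    · rintro ⟨i, hi, hir, hP⟩
      rcases (hmem e i).mp hi with rfl | rfl
      · exact hP
      · exact absurd hir (hv_lt e)
    · intro h
      exact ⟨uE e, (hmem e _).mpr (Or.inl rfl), hu_lt e, h⟩
  have hexR : ∀ (e : G.edgeSet) (P : Fin n → Prop),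
      (∃ j ∈ (e : Sym2 (Fin n)), ¬ (j : ℕ) < r ∧ P j) ↔ P (vE e) := by
    intro e P
    constructor
    · rintro ⟨j, hj, hjr, hP⟩
      rcases (hmem e j).mp hj with rfl | rfl
      · exact absurd (hu_lt e) hjr
      · exact hP
    · intro h
      exact ⟨vE e, (hmem e _).mpr (Or.inr rfl), hv_lt e, h⟩
  set t : Fin n → ℤ := fun k => if (k : ℕ) < r then s k else - s k with htdef
  constructor
  · -- forward direction
    rintro ⟨x, hx, hsum⟩
    have hs : ∀ k, s k = ∑ e : G.edgeSet, x e * (if k = uE e ∨ k = vE e then 1 else 0) := by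
      intro k
      have h0 := congrFun hsum k
      rw [Finset.sum_apply] at h0
      simp only [Pi.smul_apply, smul_eq_mul, edgeVecZ] at h0
      rw [h0]
      exact Finset.sum_congr rfl fun e _ => by
        rw [if_congr (hmem e k) rfl rfl]
    have hsumI : ∀ I : Finset (Fin n), (∀ i ∈ I, (i : ℕ) < r) →
        ∑ i ∈ I, s i = ∑ e : G.edgeSet, x e * (if uE e ∈ I then 1 else 0) := by
      intro I hI
      rw [Finset.sum_congr rfl fun k (_ : k ∈ I) => hs k, Finset.sum_comm]
      refine Finset.sum_congr rfl fun e _ => ?_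
      rw [← Finset.mul_sum]
      congr 1
      have h1 : ∀ k ∈ I, (if k = uE e ∨ k = vE e then (1:ℤ) else 0)
          = if k = uE e then 1 else 0 := by
        intro k hk
        have hkv : k ≠ vE e := fun h => hv_lt e (h ▸ hI k hk)
        by_cases h : k = uE e <;> simp [h, hkv]
      rw [Finset.sum_congr rfl h1, Finset.sum_ite_eq' I (uE e) (fun _ => (1:ℤ))]
    have hsumJ : ∀ J : Finset (Fin n), (∀ j ∈ J, ¬ (j : ℕ) < r) →
        ∑ j ∈ J, s j = ∑ e : G.edgeSet, x e * (if vE e ∈ J then 1 else 0) := by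
      intro J hJ
      rw [Finset.sum_congr rfl fun k (_ : k ∈ J) => hs k, Finset.sum_comm]
      refine Finset.sum_congr rfl fun e _ => ?_
      rw [← Finset.mul_sum]
      congr 1
      have h1 : ∀ k ∈ J, (if k = uE e ∨ k = vE e then (1:ℤ) else 0)
          = if k = vE e then 1 else 0 := by
        intro k hk
        have hku : k ≠ uE e := fun h => (hJ k hk) (h ▸ hu_lt e)
        by_cases h : k = vE e <;> simp [h, hku]
      rw [Finset.sum_congr rfl h1, Finset.sum_ite_eq' J (vE e) (fun _ => (1:ℤ))]
    constructor
    · rw [hsumI (Finset.univ.filter (fun i : Fin n => (i : ℕ) < r))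
          (fun i hi => (Finset.mem_filter.mp hi).2),
        hsumJ (Finset.univ.filter (fun i : Fin n => ¬ (i : ℕ) < r))
          (fun i hi => (Finset.mem_filter.mp hi).2)]
      refine Finset.sum_congr rfl fun e _ => ?_
      rw [if_pos (show uE e ∈ Finset.univ.filter (fun i : Fin n => (i : ℕ) < r) from
          Finset.mem_filter.mpr ⟨Finset.mem_univ _, hu_lt e⟩),
        if_pos (show vE e ∈ Finset.univ.filter (fun i : Fin n => ¬ (i : ℕ) < r) from
          Finset.mem_filter.mpr ⟨Finset.mem_univ _, hv_lt e⟩)]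
    · intro I J hI hJ _ _
      rw [hsumI I hI, hsumJ J hJ, ← Finset.sum_sub_distrib, ← Finset.sum_sub_distrib]
      refine Finset.sum_le_sum fun e _ => ?_
      have c1 : ((∃ i ∈ (e : Sym2 (Fin n)), (i : ℕ) < r ∧ i ∈ I) ∧
          (∃ j ∈ (e : Sym2 (Fin n)), ¬ (j : ℕ) < r ∧ j ∉ J)) ↔ (uE e ∈ I ∧ vE e ∉ J) :=
        and_congr (hexL e _) (hexR e _)
      have c2 : ((∃ i ∈ (e : Sym2 (Fin n)), (i : ℕ) < r ∧ i ∉ I) ∧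
          (∃ j ∈ (e : Sym2 (Fin n)), ¬ (j : ℕ) < r ∧ j ∈ J)) ↔ (uE e ∉ I ∧ vE e ∈ J) :=
        and_congr (hexL e _) (hexR e _)
      rw [if_congr c1 rfl rfl, if_congr c2 rfl rfl]
      by_cases h1 : uE e ∈ I <;> by_cases h2 : vE e ∈ J <;>
        simp [h1, h2] <;> linarith [(hx e).1, (hx e).2]
  · -- backward direction
    rintro ⟨h1, h2⟩
    have ht0 : ∑ i : Fin n, t i = 0 := by
      rw [← Finset.sum_filter_add_sum_filter_not Finset.univ
        (fun i : Fin n => (i : ℕ) < r) t]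
      have e1 : ∑ i ∈ Finset.univ.filter (fun i : Fin n => (i : ℕ) < r), t i
          = ∑ i ∈ Finset.univ.filter (fun i : Fin n => (i : ℕ) < r), s i :=
        Finset.sum_congr rfl fun i hi => by
          simp only [htdef]; rw [if_pos (Finset.mem_filter.mp hi).2]
      have e2 : ∑ i ∈ Finset.univ.filter (fun i : Fin n => ¬ (i : ℕ) < r), t i
          = - ∑ i ∈ Finset.univ.filter (fun i : Fin n => ¬ (i : ℕ) < r), s i := by
        rw [← Finset.sum_neg_distrib]
        exact Finset.sum_congr rfl fun i hi => by
          simp only [htdef]; rw [if_neg (Finset.mem_filter.mp hi).2]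
      rw [e1, e2, h1]; ring
    have H2' : ∀ S : Finset (Fin n), S.Nonempty → Sᶜ.Nonempty → LconnOn G S →
        LconnOn G Sᶜ → 0 ≤ cutF uE vE t a b S := by
      intro S hne hcne hlS hlSc
      set I := S.filter (fun i : Fin n => (i : ℕ) < r) with hIdef
      set J := S.filter (fun i : Fin n => ¬ (i : ℕ) < r) with hJdef
      have hI : ∀ i ∈ I, (i : ℕ) < r := fun i hi => (Finset.mem_filter.mp hi).2
      have hJ : ∀ j ∈ J, ¬ (j : ℕ) < r := fun j hj => (Finset.mem_filter.mp hj).2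
      have hIJ : ((I : Set (Fin n)) ∪ (J : Set (Fin n))) = (S : Set (Fin n)) := by
        ext k
        simp only [Set.mem_union, Finset.mem_coe, hIdef, hJdef, Finset.mem_filter]
        by_cases hk : (k : ℕ) < r <;> tauto
      have hIJc : (({k : Fin n | (k : ℕ) < r} \ (I : Set (Fin n))) ∪
          ({k : Fin n | ¬ (k : ℕ) < r} \ (J : Set (Fin n)))) = ((Sᶜ : Finset (Fin n)) : Set (Fin n)) := by
        ext k
        simp only [Set.mem_union, Set.mem_diff, Set.mem_setOf_eq, Finset.mem_coe,
          Finset.mem_compl, hIdef, hJdef, Finset.mem_filter]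
        by_cases hk : (k : ℕ) < r <;> simp [hk]
      have hc1 : (G.induce ((I : Set (Fin n)) ∪ (J : Set (Fin n)))).Connected := by
        rw [hIJ]
        exact induce_of_linked (Finset.coe_nonempty.mpr hne) hlS
      have hc2 : (G.induce (({k : Fin n | (k : ℕ) < r} \ (I : Set (Fin n))) ∪
          ({k : Fin n | ¬ (k : ℕ) < r} \ (J : Set (Fin n))))).Connected := by
        rw [hIJc]
        exact induce_of_linked (Finset.coe_nonempty.mpr hcne) hlSc
      have hineq := h2 I J hI hJ hc1 hc2
      have e1 : ∑ i ∈ I, t i = ∑ i ∈ I, s i :=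
        Finset.sum_congr rfl fun i hi => by
          simp only [htdef]; rw [if_pos (hI i hi)]
      have e2 : ∑ j ∈ J, t j = - ∑ j ∈ J, s j := by
        rw [← Finset.sum_neg_distrib]
        exact Finset.sum_congr rfl fun j hj => by
          simp only [htdef]; rw [if_neg (hJ j hj)]
      have hlhs : ∑ i ∈ S, t i = ∑ i ∈ I, s i - ∑ j ∈ J, s j := by
        rw [← Finset.sum_filter_add_sum_filter_not S (fun i : Fin n => (i : ℕ) < r) t,
          ← hIdef, ← hJdef, e1, e2]
        ring
      have hiu : ∀ e : G.edgeSet, uE e ∈ I ↔ uE e ∈ S := by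
        intro e
        rw [hIdef, Finset.mem_filter]
        exact ⟨fun h => h.1, fun h => ⟨h, hu_lt e⟩⟩
      have hjv : ∀ e : G.edgeSet, vE e ∈ J ↔ vE e ∈ S := by
        intro e
        rw [hJdef, Finset.mem_filter]
        exact ⟨fun h => h.1, fun h => ⟨h, hv_lt e⟩⟩
      have hrw1 : (∑ e : G.edgeSet,
          if (∃ i ∈ (e : Sym2 (Fin n)), (i : ℕ) < r ∧ i ∈ I) ∧
             (∃ j ∈ (e : Sym2 (Fin n)), ¬ (j : ℕ) < r ∧ j ∉ J) then b e else 0)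
          = ∑ e : G.edgeSet, if uE e ∈ S ∧ vE e ∉ S then b e else 0 :=
        Finset.sum_congr rfl fun e _ => if_congr
          ((and_congr (hexL e _) (hexR e _)).trans
            (and_congr (hiu e) (not_congr (hjv e)))) rfl rfl
      have hrw2 : (∑ e : G.edgeSet,
          if (∃ i ∈ (e : Sym2 (Fin n)), (i : ℕ) < r ∧ i ∉ I) ∧
             (∃ j ∈ (e : Sym2 (Fin n)), ¬ (j : ℕ) < r ∧ j ∈ J) then a e else 0)
          = ∑ e : G.edgeSet, if uE e ∉ S ∧ vE e ∈ S then a e else 0 :=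
        Finset.sum_congr rfl fun e _ => if_congr
          ((and_congr (hexL e _) (hexR e _)).trans
            (and_congr (not_congr (hiu e)) (hjv e))) rfl rfl
      rw [hrw1, hrw2] at hineq
      rw [cutF, hlhs]
      linarith
    have H := allCuts hconn uE vE hadjE t a b ht0 H2'
    obtain ⟨x, hx, hxeq⟩ := hoffman uE vE t ht0
      (∑ e : G.edgeSet, (b e - a e).toNat) a b hab H le_rfl
    refine ⟨x, hx, ?_⟩
    funext k
    rw [Finset.sum_apply]
    simp only [Pi.smul_apply, smul_eq_mul, edgeVecZ]
    have hk := hxeq k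
    by_cases hkr : (k : ℕ) < r
    · have hts : t k = s k := by simp only [htdef]; rw [if_pos hkr]
      rw [← hts, hk]
      refine Finset.sum_congr rfl fun e _ => ?_
      have h2v : ¬ vE e = k := fun h => hv_lt e (h ▸ hkr)
      have hiff : (k ∈ (e : Sym2 (Fin n))) ↔ (uE e = k) := by
        rw [hmem e k]
        constructor
        · rintro (rfl | rfl)
          · rfl
          · exact absurd hkr (hv_lt e)
        · intro h; exact Or.inl h.symm
      rw [if_congr hiff rfl rfl, if_neg h2v]
      ring
    · have hts : t k = - s k := by simp only [htdef]; rw [if_neg hkr]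
      have hsk : s k = - t k := by rw [hts]; ring
      rw [hsk, hk, ← Finset.sum_neg_distrib]
      refine Finset.sum_congr rfl fun e _ => ?_
      have h2u : ¬ uE e = k := fun h => hkr (h ▸ hu_lt e)
      have hiff : (k ∈ (e : Sym2 (Fin n))) ↔ (vE e = k) := by
        rw [hmem e k]
        constructor
        · rintro (rfl | rfl)
          · exact absurd (hu_lt e) hkr
          · rfl
        · intro h; exact Or.inr h.symm
      rw [if_congr hiff rfl rfl, if_neg h2u]
      ring
end
end

section
/- Let D be a connected oriented graph with vertex set {1,...,n}, and let r_1,...,r_n and a_e ≤ b_e (for e ∈ A(D)) be integers. Then there exist integers x_e with a_e ≤ x_e ≤ b_e (for e ∈ A(D)) such that Σ_{i=1}^n r_i f_i = Σ_{e∈A(D)} x_e w(e), if and only if: (1) r_1 + ⋯ + r_n = 0; and (2) for every nonempty proper subset I of {1,...,n} such that the induced subgraphs of D on I and on {1,...,n}\I are connected, one has Σ_{i∈I} r_i ≤ Σ_{e=(i→j), i∈I, j∉I} b_e − Σ_{e=(i→j), i∉I, j∈I} a_e. -/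
open scoped Classical

noncomputable section

/-- The column `f_i - f_j` (over ℤ) of the directed incidence matrix corresponding to
an arc `e = (i → j)`. -/
def arcVecZ {n : ℕ} (i j : Fin n) : Fin n → ℤ := fun k =>
  (if k = i then 1 else 0) - (if k = j then 1 else 0)

namespace OLandau

variable {V E : Type*} [Fintype V] [DecidableEq V] [Fintype E]

/-- cut value: out-arcs weighted by `b` minus in-arcs weighted by `a`. -/
def cutVal (tl hd : E → V) (a b : E → ℤ) (S : Finset V) : ℤ :=
  ∑ e, ((if tl e ∈ S ∧ hd e ∉ S then b e else 0) - (if tl e ∉ S ∧ hd e ∈ S then a e else 0))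

/-- divergence of `x` at a vertex. -/
def divg (tl hd : E → V) (x : E → ℤ) (k : V) : ℤ :=
  ∑ e, ((if tl e = k then x e else 0) - (if hd e = k then x e else 0))

lemma sum_divg (tl hd : E → V) (x : E → ℤ) (S : Finset V) :
    ∑ k ∈ S, divg tl hd x k = cutVal tl hd x x S := by
  unfold divg cutVal
  rw [Finset.sum_comm]
  refine Finset.sum_congr rfl fun e _ => ?_
  rw [Finset.sum_sub_distrib]
  rw [Finset.sum_ite_eq S (tl e) (fun _ => x e), Finset.sum_ite_eq S (hd e) (fun _ => x e)]
  by_cases h1 : tl e ∈ S <;> by_cases h2 : hd e ∈ S <;> simp [h1, h2]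

lemma cutVal_univ (tl hd : E → V) (a b : E → ℤ) :
    cutVal tl hd a b (Finset.univ : Finset V) = 0 := by
  unfold cutVal; simp

lemma cutVal_empty (tl hd : E → V) (a b : E → ℤ) :
    cutVal tl hd a b (∅ : Finset V) = 0 := by
  unfold cutVal; simp

lemma hoffman (tl hd : E → V) (r : V → ℤ) :
    ∀ (N : ℕ) (a b : E → ℤ), (∀ e, a e ≤ b e) → (∑ e, (b e - a e)) = (N : ℤ) →
    (∑ i, r i) = 0 → (∀ S : Finset V, ∑ i ∈ S, r i ≤ cutVal tl hd a b S) →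
    ∃ x : E → ℤ, (∀ e, a e ≤ x e ∧ x e ≤ b e) ∧ ∀ k, r k = divg tl hd x k := by
  intro N
  induction N with
  | zero =>
    intro a b hab hN hsum hcut
    have hba : ∀ e ∈ (Finset.univ : Finset E), b e - a e = 0 := by
      rw [← Finset.sum_eq_zero_iff_of_nonneg (fun e _ => by linarith [hab e])]
      simpa using hN
    have hba' : ∀ e, b e = a e := fun e => by have := hba e (Finset.mem_univ e); linarith
    refine ⟨a, fun e => ⟨le_refl _, by rw [hba']⟩, fun k => ?_⟩
    have hcv : ∀ S : Finset V, cutVal tl hd a b S = cutVal tl hd a a S := by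
      intro S; unfold cutVal
      refine Finset.sum_congr rfl fun e _ => by rw [hba']
    have h1 : r k ≤ divg tl hd a k := by
      have := hcut {k}
      rw [hcv, ← sum_divg] at this
      simpa using this
    have h2 : divg tl hd a k ≤ r k := by
      have := hcut (Finset.univ \ {k})
      rw [hcv, ← sum_divg] at this
      have e1 : ∑ i ∈ Finset.univ \ {k}, r i = - r k := by
        rw [Finset.sum_sdiff_eq_sub (Finset.subset_univ _)]
        simp [hsum]
      have e2 : ∑ i ∈ Finset.univ \ {k}, divg tl hd a i = - divg tl hd a k := by
        rw [Finset.sum_sdiff_eq_sub (Finset.subset_univ _)]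
        have := sum_divg tl hd a (Finset.univ : Finset V)
        rw [cutVal_univ] at this
        simp [this]
      rw [e1, e2] at this; linarith
    linarith
  | succ N ih =>
    intro a b hab hN hsum hcut
    -- find a slack edge
    have hex : ∃ e0, a e0 < b e0 := by
      by_contra h
      push_neg at h
      have : ∀ e ∈ (Finset.univ : Finset E), b e - a e = 0 :=
        fun e _ => by have := hab e; have := h e; linarith
      rw [Finset.sum_congr rfl this] at hN
      simp at hN
      omega
    obtain ⟨e0, he0⟩ := hex
    set a' : E → ℤ := fun e => if e = e0 then a e + 1 else a e with ha'
    set b' : E → ℤ := fun e => if e = e0 then b e - 1 else b e with hb'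
    have hsa' : (∑ e, (b e - a' e)) = (N : ℤ) := by
      have : ∀ e, b e - a' e = (b e - a e) - (if e = e0 then 1 else 0) := by
        intro e; simp only [ha']; split_ifs <;> ring
      rw [Finset.sum_congr rfl fun e _ => this e, Finset.sum_sub_distrib, hN,
        Finset.sum_ite_eq' Finset.univ e0 (fun _ => (1:ℤ))]
      simp
    have hsb' : (∑ e, (b' e - a e)) = (N : ℤ) := by
      have : ∀ e, b' e - a e = (b e - a e) - (if e = e0 then 1 else 0) := by
        intro e; simp only [hb']; split_ifs <;> ring
      rw [Finset.sum_congr rfl fun e _ => this e, Finset.sum_sub_distrib, hN,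
        Finset.sum_ite_eq' Finset.univ e0 (fun _ => (1:ℤ))]
      simp
    by_cases hca : ∀ S : Finset V, ∑ i ∈ S, r i ≤ cutVal tl hd a' b S
    · obtain ⟨x, hx1, hx2⟩ := ih a' b
        (fun e => by
          simp only [ha']
          split_ifs with h
          · subst h; omega
          · exact hab e)
        hsa' hsum hca
      refine ⟨x, fun e => ⟨le_trans ?_ (hx1 e).1, (hx1 e).2⟩, hx2⟩
      simp only [ha']; split_ifs <;> omega
    · by_cases hcb : ∀ S : Finset V, ∑ i ∈ S, r i ≤ cutVal tl hd a b' S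
      · obtain ⟨x, hx1, hx2⟩ := ih a b'
          (fun e => by
            simp only [hb']
            split_ifs with h
            · subst h; omega
            · exact hab e)
          hsb' hsum hcb
        refine ⟨x, fun e => ⟨(hx1 e).1, le_trans (hx1 e).2 ?_⟩, hx2⟩
        simp only [hb']; split_ifs <;> omega
      · exfalso
        push_neg at hca hcb
        obtain ⟨S, hS⟩ := hca
        obtain ⟨T, hT⟩ := hcb
        -- analyze S
        have hdiffS : cutVal tl hd a b S - cutVal tl hd a' b S =
            (if tl e0 ∉ S ∧ hd e0 ∈ S then 1 else 0) := by
          unfold cutVal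
          rw [← Finset.sum_sub_distrib]
          have : ∀ e, ((if tl e ∈ S ∧ hd e ∉ S then b e else 0) -
              (if tl e ∉ S ∧ hd e ∈ S then a e else 0)) -
              ((if tl e ∈ S ∧ hd e ∉ S then b e else 0) -
              (if tl e ∉ S ∧ hd e ∈ S then a' e else 0)) =
              (if e = e0 then (if tl e ∉ S ∧ hd e ∈ S then 1 else 0) else 0) := by
            intro e; simp only [ha']; split_ifs <;> ring
          rw [Finset.sum_congr rfl fun e _ => this e,
            Finset.sum_ite_eq' Finset.univ e0 (fun e => (if tl e ∉ S ∧ hd e ∈ S then (1:ℤ) else 0))]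
          simp
        have hSmem : tl e0 ∉ S ∧ hd e0 ∈ S := by
          by_contra h
          rw [if_neg h] at hdiffS
          have := hcut S
          omega
        have hStight : ∑ i ∈ S, r i = cutVal tl hd a b S := by
          rw [if_pos hSmem] at hdiffS
          have := hcut S
          omega
        -- analyze T
        have hdiffT : cutVal tl hd a b T - cutVal tl hd a b' T =
            (if tl e0 ∈ T ∧ hd e0 ∉ T then 1 else 0) := by
          unfold cutVal
          rw [← Finset.sum_sub_distrib]
          have : ∀ e, ((if tl e ∈ T ∧ hd e ∉ T then b e else 0) -
              (if tl e ∉ T ∧ hd e ∈ T then a e else 0)) -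
              ((if tl e ∈ T ∧ hd e ∉ T then b' e else 0) -
              (if tl e ∉ T ∧ hd e ∈ T then a e else 0)) =
              (if e = e0 then (if tl e ∈ T ∧ hd e ∉ T then 1 else 0) else 0) := by
            intro e; simp only [hb']; split_ifs <;> ring
          rw [Finset.sum_congr rfl fun e _ => this e,
            Finset.sum_ite_eq' Finset.univ e0 (fun e => (if tl e ∈ T ∧ hd e ∉ T then (1:ℤ) else 0))]
          simp
        have hTmem : tl e0 ∈ T ∧ hd e0 ∉ T := by
          by_contra h
          rw [if_neg h] at hdiffT
          have := hcut T
          omega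
        have hTtight : ∑ i ∈ T, r i = cutVal tl hd a b T := by
          rw [if_pos hTmem] at hdiffT
          have := hcut T
          omega
        -- submodularity with strict gap at e0
        have hsubmod : cutVal tl hd a b (S ∪ T) + cutVal tl hd a b (S ∩ T) + (b e0 - a e0)
            ≤ cutVal tl hd a b S + cutVal tl hd a b T := by
          unfold cutVal
          have key : ∀ e ∈ (Finset.univ : Finset E),
              (((if tl e ∈ S ∪ T ∧ hd e ∉ S ∪ T then b e else 0) -
                (if tl e ∉ S ∪ T ∧ hd e ∈ S ∪ T then a e else 0)) +
               ((if tl e ∈ S ∩ T ∧ hd e ∉ S ∩ T then b e else 0) -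
                (if tl e ∉ S ∩ T ∧ hd e ∈ S ∩ T then a e else 0))) +
              (if e = e0 then b e - a e else 0) ≤
              ((if tl e ∈ S ∧ hd e ∉ S then b e else 0) -
                (if tl e ∉ S ∧ hd e ∈ S then a e else 0)) +
              ((if tl e ∈ T ∧ hd e ∉ T then b e else 0) -
                (if tl e ∉ T ∧ hd e ∈ T then a e else 0)) := by
            intro e _
            have hab' := hab e
            by_cases he : e = e0
            · subst he
              simp only [if_pos rfl, Finset.mem_union, Finset.mem_inter,
                hSmem.2, hTmem.1, hSmem.1, hTmem.2]
              simp [hSmem.1, hSmem.2, hTmem.1, hTmem.2]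
            · rw [if_neg he]
              by_cases h1 : tl e ∈ S <;> by_cases h2 : tl e ∈ T <;>
                by_cases h3 : hd e ∈ S <;> by_cases h4 : hd e ∈ T <;>
                simp [Finset.mem_union, Finset.mem_inter, h1, h2, h3, h4] <;> omega
          calc (∑ e, ((if tl e ∈ S ∪ T ∧ hd e ∉ S ∪ T then b e else 0) -
                (if tl e ∉ S ∪ T ∧ hd e ∈ S ∪ T then a e else 0))) +
              (∑ e, ((if tl e ∈ S ∩ T ∧ hd e ∉ S ∩ T then b e else 0) -
                (if tl e ∉ S ∩ T ∧ hd e ∈ S ∩ T then a e else 0))) + (b e0 - a e0)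
              = ∑ e, ((((if tl e ∈ S ∪ T ∧ hd e ∉ S ∪ T then b e else 0) -
                (if tl e ∉ S ∪ T ∧ hd e ∈ S ∪ T then a e else 0)) +
               ((if tl e ∈ S ∩ T ∧ hd e ∉ S ∩ T then b e else 0) -
                (if tl e ∉ S ∩ T ∧ hd e ∈ S ∩ T then a e else 0))) +
              (if e = e0 then b e - a e else 0)) := by
                rw [Finset.sum_add_distrib, Finset.sum_add_distrib,
                  Finset.sum_ite_eq' Finset.univ e0 (fun e => b e - a e)]
                simp
            _ ≤ _ := by
                rw [← Finset.sum_add_distrib]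
                exact Finset.sum_le_sum key
        have hrsum : ∑ i ∈ (S ∪ T), r i + ∑ i ∈ (S ∩ T), r i = ∑ i ∈ S, r i + ∑ i ∈ T, r i :=
          Finset.sum_union_inter
        have h1 := hcut (S ∪ T)
        have h2 := hcut (S ∩ T)
        omega



/-- adjacency within a finite vertex set -/
def rel (G : SimpleGraph V) (S : Finset V) (u w : V) : Prop :=
  u ∈ S ∧ w ∈ S ∧ G.Adj u w

/-- connectivity of a finite vertex set -/
def fconn (G : SimpleGraph V) (S : Finset V) : Prop :=
  S.Nonempty ∧ ∀ u ∈ S, ∀ w ∈ S, Relation.ReflTransGen (rel G S) u w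

lemma rel_symm (G : SimpleGraph V) (S : Finset V) : Symmetric (rel G S) :=
  fun _ _ h => ⟨h.2.1, h.1, h.2.2.symm⟩

lemma rtg_symm {G : SimpleGraph V} {S : Finset V} {u w : V}
    (h : Relation.ReflTransGen (rel G S) u w) : Relation.ReflTransGen (rel G S) w u :=
  by haveI : Std.Symm (rel G S) := ⟨fun _ _ h' => rel_symm G S h'⟩; exact symm h

lemma rtg_mono {G : SimpleGraph V} {S T : Finset V} (hST : S ⊆ T) {u w : V}
    (h : Relation.ReflTransGen (rel G S) u w) : Relation.ReflTransGen (rel G T) u w :=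
  Relation.ReflTransGen.mono (fun _ _ hr => ⟨hST hr.1, hST hr.2.1, hr.2.2⟩) _ _ h

/-- the bridge between `fconn` and Mathlib's induced-subgraph connectivity -/
lemma fconn_iff_induce_connected (G : SimpleGraph V) (S : Finset V) :
    fconn G S ↔ (G.induce (S : Set V)).Connected := by
  constructor
  · rintro ⟨hne, h⟩
    obtain ⟨v, hv⟩ := hne
    rw [SimpleGraph.connected_iff]
    refine ⟨?_, ⟨⟨v, hv⟩⟩⟩
    · intro x y
      have hx : Relation.ReflTransGen (rel G S) (x : V) (y : V) := h x x.2 y y.2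
      -- convert to reachability in the induced graph
      clear hv
      obtain ⟨x, hxS⟩ := x
      obtain ⟨y, hyS⟩ := y
      simp only at hx
      induction hx with
      | refl => rfl
      | tail h1 h2 ih =>
        obtain ⟨hb, hc, hadj⟩ := h2
        refine SimpleGraph.Reachable.trans (ih hb) ?_
        exact SimpleGraph.Adj.reachable (by simpa using hadj)
  · intro hc
    have hpre := hc.preconnected
    obtain ⟨⟨v, hv⟩⟩ := hc.nonempty
    refine ⟨⟨v, hv⟩, fun u hu w hw => ?_⟩
    have hreach := hpre ⟨u, hu⟩ ⟨w, hw⟩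
    obtain ⟨p⟩ := hreach
    clear hpre
    -- induct over the walk
    have : ∀ (x y : (S : Set V)) (_ : (G.induce (S : Set V)).Walk x y),
        Relation.ReflTransGen (rel G S) x y := by
      intro x y p
      induction p with
      | nil => exact Relation.ReflTransGen.refl
      | @cons a b c hadj p ih =>
        refine Relation.ReflTransGen.head ⟨a.2, b.2, by simpa using hadj⟩ ih
    exact this _ _ p

lemma connected_rtg {G : SimpleGraph V} (hG : G.Connected) (u w : V) :
    Relation.ReflTransGen G.Adj u w := by
  obtain ⟨p⟩ := hG.preconnected u w
  induction p with
  | nil => exact Relation.ReflTransGen.refl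
  | cons hadj p ih => exact Relation.ReflTransGen.head hadj ih

/-- a connected graph has an edge leaving any proper nonempty set -/
lemma exists_crossing_edge {G : SimpleGraph V} (hG : G.Connected) {A : Finset V}
    (hne : A.Nonempty) (hproper : A ≠ Finset.univ) :
    ∃ u ∈ A, ∃ w, w ∉ A ∧ G.Adj u w := by
  obtain ⟨u, hu⟩ := hne
  have : ∃ w, w ∉ A := by
    by_contra h
    push_neg at h
    exact hproper (Finset.eq_univ_iff_forall.2 h)
  obtain ⟨w, hw⟩ := this
  have hr := connected_rtg hG u w
  clear hproper
  revert hu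
  induction hr using Relation.ReflTransGen.head_induction_on with
  | refl => exact fun hu => absurd hu hw
  | head hadj h ih =>
    rename_i x b
    intro hx
    by_cases hb : b ∈ A
    · exact ih hb
    · exact ⟨x, hx, b, hb, hadj⟩

/-- the connected component of `v` inside `S` -/
def comp (G : SimpleGraph V) (S : Finset V) (v : V) : Finset V :=
  S.filter (fun u => Relation.ReflTransGen (rel G S) v u)

lemma comp_subset (G : SimpleGraph V) (S : Finset V) (v : V) : comp G S v ⊆ S :=
  Finset.filter_subset _ _

lemma mem_comp_self (G : SimpleGraph V) {S : Finset V} {v : V} (hv : v ∈ S) :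
    v ∈ comp G S v := Finset.mem_filter.2 ⟨hv, Relation.ReflTransGen.refl⟩

lemma comp_no_edge {G : SimpleGraph V} {S : Finset V} {v : V} {u w : V}
    (hu : u ∈ comp G S v) (hwS : w ∈ S) (hw : w ∉ comp G S v) : ¬ G.Adj u w := by
  intro hadj
  obtain ⟨huS, hru⟩ := Finset.mem_filter.1 hu
  exact hw (Finset.mem_filter.2 ⟨hwS, hru.tail ⟨huS, hwS, hadj⟩⟩)

lemma comp_fconn {G : SimpleGraph V} {S : Finset V} {v : V} (hv : v ∈ S) :
    fconn G (comp G S v) := by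
  refine ⟨⟨v, mem_comp_self G hv⟩, ?_⟩
  have key : ∀ u, Relation.ReflTransGen (rel G S) v u →
      Relation.ReflTransGen (rel G (comp G S v)) v u := by
    intro u h
    induction h with
    | refl => exact Relation.ReflTransGen.refl
    | @tail b c h1 h2 ih =>
      have hb : b ∈ comp G S v := Finset.mem_filter.2 ⟨h2.1, h1⟩
      have hc : c ∈ comp G S v := Finset.mem_filter.2 ⟨h2.2.1, h1.tail h2⟩
      exact ih.tail ⟨hb, hc, h2.2.2⟩
  intro u hu w hw
  exact (rtg_symm (key u (Finset.mem_filter.1 hu).2)).trans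
    (key w (Finset.mem_filter.1 hw).2)

lemma fconn_of_not_fconn_exists_split {G : SimpleGraph V} {S : Finset V}
    (hne : S.Nonempty) (hnc : ¬ fconn G S) :
    ∃ A B : Finset V, A.Nonempty ∧ B.Nonempty ∧ Disjoint A B ∧ A ∪ B = S ∧
      fconn G A ∧ (∀ u ∈ A, ∀ w ∈ B, ¬ G.Adj u w) := by
  unfold fconn at hnc
  push_neg at hnc
  obtain ⟨u, hu, w, hw, hnr⟩ := hnc hne
  refine ⟨comp G S u, S \ comp G S u, ⟨u, mem_comp_self G hu⟩, ⟨w, ?_⟩,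
    Finset.disjoint_sdiff, Finset.union_sdiff_of_subset (comp_subset G S u),
    comp_fconn hu, ?_⟩
  · refine Finset.mem_sdiff.2 ⟨hw, fun hmem => hnr (Finset.mem_filter.1 hmem).2⟩
  · intro x hx y hy
    exact comp_no_edge hx (Finset.mem_sdiff.1 hy).1 (Finset.mem_sdiff.1 hy).2

lemma fconn_union {G : SimpleGraph V} {A B : Finset V} (hA : fconn G A) (hB : fconn G B)
    {a0 b0 : V} (ha0 : a0 ∈ A) (hb0 : b0 ∈ B) (hadj : G.Adj a0 b0) :
    fconn G (A ∪ B) := by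
  refine ⟨⟨a0, Finset.mem_union_left _ ha0⟩, ?_⟩
  have hstep : Relation.ReflTransGen (rel G (A ∪ B)) a0 b0 :=
    Relation.ReflTransGen.single ⟨Finset.mem_union_left _ ha0,
      Finset.mem_union_right _ hb0, hadj⟩
  have hreach : ∀ x ∈ A ∪ B, Relation.ReflTransGen (rel G (A ∪ B)) a0 x := by
    intro x hx
    rcases Finset.mem_union.1 hx with h | h
    · exact rtg_mono Finset.subset_union_left (hA.2 a0 ha0 x h)
    · exact hstep.trans (rtg_mono Finset.subset_union_right (hB.2 b0 hb0 x h))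
  intro x hx y hy
  exact (rtg_symm (hreach x hx)).trans (hreach y hy)

/-- If `I` is connected, `A` is disjoint from `I`, and all edges out of `A`
go into `I`, then the complement of `A` is connected (given `G` connected). -/
lemma fconn_compl {G : SimpleGraph V} (hG : G.Connected) {I A : Finset V}
    (hI : fconn G I) (hdisj : Disjoint I A)
    (hedge : ∀ u ∈ A, ∀ w, w ∉ A → w ∉ I → ¬ G.Adj u w) :
    fconn G Aᶜ := by
  obtain ⟨⟨i0, hi0⟩, hIc⟩ := hI
  have hi0c : i0 ∈ Aᶜ := Finset.mem_compl.2 (Finset.disjoint_left.1 hdisj hi0)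
  have key : ∀ x, x ∉ A → Relation.ReflTransGen (rel G Aᶜ) x i0 := by
    intro x hx
    have hr := connected_rtg hG x i0
    revert hx
    induction hr using Relation.ReflTransGen.head_induction_on with
    | refl => exact fun _ => Relation.ReflTransGen.refl
    | head hadj h ih =>
      rename_i y b
      intro hy
      by_cases hb : b ∈ A
      · -- the step enters A, so y must be in I
        have hyI : y ∈ I := by
          by_contra hyI
          exact hedge b hb y hy hyI hadj.symm
        exact rtg_mono (fun z hz => Finset.mem_compl.2 (Finset.disjoint_left.1 hdisj hz))
          (hIc y hyI i0 hi0)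
      · exact Relation.ReflTransGen.head
          ⟨Finset.mem_compl.2 hy, Finset.mem_compl.2 hb, hadj⟩ (ih hb)
  refine ⟨⟨i0, hi0c⟩, fun x hx y hy => ?_⟩
  exact (key x (Finset.mem_compl.1 hx)).trans (rtg_symm (key y (Finset.mem_compl.1 hy)))


section Reduction

variable {E' : Type*} [Fintype E'] (G : SimpleGraph V) (tl hd : E' → V) (a b : E' → ℤ) (r : V → ℤ)

/-- the excess function of a cut -/
def gval (S : Finset V) : ℤ := cutVal tl hd a b S - ∑ i ∈ S, r i

lemma gval_empty : gval tl hd a b r ∅ = 0 := by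
  unfold gval; rw [cutVal_empty]; simp

lemma gval_univ (hsum : ∑ i, r i = 0) : gval tl hd a b r Finset.univ = 0 := by
  unfold gval; rw [cutVal_univ, hsum]; simp

lemma gval_add {A B : Finset V} (hdisj : Disjoint A B)
    (hAB : ∀ e, ¬ (tl e ∈ A ∧ hd e ∈ B)) (hBA : ∀ e, ¬ (tl e ∈ B ∧ hd e ∈ A)) :
    gval tl hd a b r (A ∪ B) = gval tl hd a b r A + gval tl hd a b r B := by
  unfold gval cutVal
  rw [Finset.sum_union hdisj]
  have key : ∀ e ∈ (Finset.univ : Finset E'),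
      ((if tl e ∈ A ∪ B ∧ hd e ∉ A ∪ B then b e else 0) -
        (if tl e ∉ A ∪ B ∧ hd e ∈ A ∪ B then a e else 0)) =
      (((if tl e ∈ A ∧ hd e ∉ A then b e else 0) -
        (if tl e ∉ A ∧ hd e ∈ A then a e else 0)) +
       ((if tl e ∈ B ∧ hd e ∉ B then b e else 0) -
        (if tl e ∉ B ∧ hd e ∈ B then a e else 0))) := by
    intro e _
    have h1 := hAB e
    have h2 := hBA e
    have h3 : ¬ (tl e ∈ A ∧ tl e ∈ B) := fun h => Finset.disjoint_left.1 hdisj h.1 h.2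
    have h4 : ¬ (hd e ∈ A ∧ hd e ∈ B) := fun h => Finset.disjoint_left.1 hdisj h.1 h.2
    by_cases hta : tl e ∈ A <;> by_cases htb : tl e ∈ B <;>
      by_cases hha : hd e ∈ A <;> by_cases hhb : hd e ∈ B <;>
      simp [Finset.mem_union, hta, htb, hha, hhb] at * <;> omega
  rw [Finset.sum_congr rfl key, Finset.sum_add_distrib]
  ring

lemma gval_split {I A : Finset V} (hdisj : Disjoint I A)
    (hAout : ∀ e, ¬ (tl e ∈ A ∧ hd e ∉ I ∪ A)) (hAin : ∀ e, ¬ (tl e ∉ I ∪ A ∧ hd e ∈ A))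
    (hsum : ∑ i, r i = 0) :
    gval tl hd a b r I = gval tl hd a b r (I ∪ A) + gval tl hd a b r Aᶜ := by
  unfold gval cutVal
  have hr : ∑ i ∈ (I ∪ A), r i + ∑ i ∈ Aᶜ, r i = ∑ i ∈ I, r i := by
    have h1 : (I ∪ A) ∪ Aᶜ = Finset.univ := by
      apply Finset.eq_univ_iff_forall.2
      intro x
      by_cases hx : x ∈ A
      · exact Finset.mem_union_left _ (Finset.mem_union_right _ hx)
      · exact Finset.mem_union_right _ (Finset.mem_compl.2 hx)
    have h2 : (I ∪ A) ∩ Aᶜ = I := by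
      ext x
      simp only [Finset.mem_inter, Finset.mem_union, Finset.mem_compl]
      constructor
      · rintro ⟨h | h, hc⟩
        · exact h
        · exact absurd h hc
      · intro h
        exact ⟨Or.inl h, Finset.disjoint_left.1 hdisj h⟩
    have := Finset.sum_union_inter (s₁ := I ∪ A) (s₂ := Aᶜ) (f := r)
    rw [h1, h2, hsum] at this
    linarith
  have key : ∀ e ∈ (Finset.univ : Finset E'),
      ((if tl e ∈ I ∧ hd e ∉ I then b e else 0) -
        (if tl e ∉ I ∧ hd e ∈ I then a e else 0)) =
      (((if tl e ∈ I ∪ A ∧ hd e ∉ I ∪ A then b e else 0) -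
        (if tl e ∉ I ∪ A ∧ hd e ∈ I ∪ A then a e else 0)) +
       ((if tl e ∈ Aᶜ ∧ hd e ∉ Aᶜ then b e else 0) -
        (if tl e ∉ Aᶜ ∧ hd e ∈ Aᶜ then a e else 0))) := by
    intro e _
    have h1 := hAout e
    have h2 := hAin e
    have h3 : ¬ (tl e ∈ I ∧ tl e ∈ A) := fun h => Finset.disjoint_left.1 hdisj h.1 h.2
    have h4 : ¬ (hd e ∈ I ∧ hd e ∈ A) := fun h => Finset.disjoint_left.1 hdisj h.1 h.2
    by_cases hti : tl e ∈ I <;> by_cases hta : tl e ∈ A <;>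
      by_cases hhi : hd e ∈ I <;> by_cases hha : hd e ∈ A <;>
      simp [Finset.mem_union, Finset.mem_compl, hti, hta, hhi, hha] at * <;> omega
  rw [Finset.sum_congr rfl key, Finset.sum_add_distrib, ← hr]
  ring

/-- Claim A: connected proper cuts have nonnegative excess, by induction on the
complement, assuming the "nice" cuts do. -/
lemma claimA (hG : G.Connected)
    (hadjD : ∀ e, tl e ≠ hd e → G.Adj (tl e) (hd e))
    (hsum : ∑ i, r i = 0)
    (H : ∀ I : Finset V, I.Nonempty → I ≠ Finset.univ → fconn G I → fconn G Iᶜ →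
      0 ≤ gval tl hd a b r I) :
    ∀ (m : ℕ) (I : Finset V), Iᶜ.card = m → I.Nonempty → fconn G I →
      0 ≤ gval tl hd a b r I := by
  intro m
  induction m using Nat.strong_induction_on with
  | _ m ih =>
    intro I hcard hne hfc
    by_cases huniv : I = Finset.univ
    · rw [huniv, gval_univ tl hd a b r hsum]
    · have hcne : Iᶜ.Nonempty := by
        rw [← Finset.card_pos]
        by_contra h
        push_neg at h
        simp only [Nat.le_zero, Finset.card_eq_zero] at h
        exact huniv (by simpa using congrArg (·ᶜ) h)
      by_cases hcc : fconn G Iᶜ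
      · exact H I hne huniv hfc hcc
      · -- split the complement
        obtain ⟨A, B, hAne, hBne, hABdisj, hABunion, hAfc, hnoedge⟩ :=
          fconn_of_not_fconn_exists_split hcne hcc
        have hIA : Disjoint I A := by
          have : A ⊆ Iᶜ := hABunion ▸ Finset.subset_union_left
          exact Finset.disjoint_left.2 fun x hx hxA =>
            Finset.mem_compl.1 (this hxA) hx
        have hIB : Disjoint I B := by
          have : B ⊆ Iᶜ := hABunion ▸ Finset.subset_union_right
          exact Finset.disjoint_left.2 fun x hx hxB =>
            Finset.mem_compl.1 (this hxB) hx
        -- no graph edges between A and B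
        have hnoedge' : ∀ u ∈ A, ∀ w ∈ B, ¬ G.Adj u w := by
          intro u hu w hw hadj
          exact hnoedge u hu w hw hadj
        -- membership facts: Iᶜ = A ∪ B
        have hmem : ∀ x, x ∉ A → x ∉ B → x ∈ I := by
          intro x hxA hxB
          by_contra hxI
          have : x ∈ A ∪ B := hABunion ▸ Finset.mem_compl.2 hxI
          rcases Finset.mem_union.1 this with h | h
          · exact hxA h
          · exact hxB h
        -- I ∪ B = Aᶜ
        have hIBA : I ∪ B = Aᶜ := by
          ext x
          simp only [Finset.mem_union, Finset.mem_compl]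
          constructor
          · rintro (h | h)
            · exact Finset.disjoint_left.1 hIA h
            · exact Finset.disjoint_left.1 (hABdisj.symm) h
          · intro h
            by_cases hxB : x ∈ B
            · exact Or.inr hxB
            · exact Or.inl (hmem x h hxB)
        -- edges out of A go to I
        have hedgeA : ∀ u ∈ A, ∀ w, w ∉ A → w ∉ I → ¬ G.Adj u w := by
          intro u hu w hwA hwI hadj
          exact hnoedge' u hu w (by
            by_contra hwB
            exact hwI (hmem w hwA hwB)) hadj
        -- arcs between A and (I∪A)ᶜ = B are absent
        have harcA : ∀ e, ¬ (tl e ∈ A ∧ hd e ∉ I ∪ A) := by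
          rintro e ⟨h1, h2⟩
          have htl : tl e ≠ hd e := by
            intro h
            exact h2 (Finset.mem_union_right _ (h ▸ h1))
          have hhd : hd e ∈ B := by
            apply by_contra
            intro h
            exact h2 (Finset.mem_union_left _
              (hmem _ (fun hA => h2 (Finset.mem_union_right _ hA)) h))
          exact hnoedge' _ h1 _ hhd (hadjD e htl)
        have harcA' : ∀ e, ¬ (tl e ∉ I ∪ A ∧ hd e ∈ A) := by
          rintro e ⟨h1, h2⟩
          have htl : tl e ≠ hd e := by
            intro h
            exact h1 (Finset.mem_union_right _ (h ▸ h2))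
          have htlB : tl e ∈ B := by
            apply by_contra
            intro h
            exact h1 (Finset.mem_union_left _
              (hmem _ (fun hA => h1 (Finset.mem_union_right _ hA)) h))
          exact hnoedge' _ h2 _ htlB ((hadjD e htl).symm)
        -- similarly for B
        have hmemB : ∀ x, x ∉ B → x ∉ A → x ∈ I := fun x h1 h2 => hmem x h2 h1
        have harcB : ∀ e, ¬ (tl e ∈ B ∧ hd e ∉ I ∪ B) := by
          rintro e ⟨h1, h2⟩
          have htl : tl e ≠ hd e := fun h => h2 (Finset.mem_union_right _ (h ▸ h1))
          have hhd : hd e ∈ A := by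
            apply by_contra
            intro h
            exact h2 (Finset.mem_union_left _
              (hmemB _ (fun hB => h2 (Finset.mem_union_right _ hB)) h))
          exact hnoedge' _ hhd _ h1 ((hadjD e htl).symm)
        have harcB' : ∀ e, ¬ (tl e ∉ I ∪ B ∧ hd e ∈ B) := by
          rintro e ⟨h1, h2⟩
          have htl : tl e ≠ hd e := fun h => h1 (Finset.mem_union_right _ (h ▸ h2))
          have htlA : tl e ∈ A := by
            apply by_contra
            intro h
            exact h1 (Finset.mem_union_left _
              (hmemB _ (fun hB => h1 (Finset.mem_union_right _ hB)) h))
          exact hnoedge' _ htlA _ h2 (hadjD e htl)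
        -- the two splits
        have hsplit := gval_split tl hd a b r hIA harcA harcA' hsum
        -- connectivity of I ∪ A: find an edge between A and I
        have hIAfc : fconn G (I ∪ A) := by
          have hAproper : A ≠ Finset.univ := by
            intro h
            obtain ⟨i, hi⟩ := hne
            exact Finset.disjoint_left.1 hIA hi (h ▸ Finset.mem_univ i)
          obtain ⟨u, hu, w, hw, hadj⟩ := exists_crossing_edge hG hAne hAproper
          have hwI : w ∈ I := by
            apply hmem w hw
            intro hwB
            exact hnoedge' u hu w hwB hadj
          exact Finset.union_comm I A ▸ fconn_union hAfc hfc hu hwI hadj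
        -- connectivity of Aᶜ = I ∪ B
        have hAcfc : fconn G Aᶜ := fconn_compl hG hfc hIA hedgeA
        -- connectivity of Bᶜ = I ∪ A
        -- cardinalities
        have hcardsum : Finset.card A + Finset.card B = m := by
          rw [← hcard, ← hABunion, Finset.card_union_of_disjoint hABdisj]
        have hIAc : (I ∪ A)ᶜ = B := by
          ext x
          simp only [Finset.mem_compl, Finset.mem_union]
          constructor
          · intro h
            push_neg at h
            by_contra hxB
            exact h.1 (hmem x h.2 hxB)
          · intro h
            push_neg
            exact ⟨Finset.disjoint_right.1 hIB h, Finset.disjoint_right.1 hABdisj h⟩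
        have hAcc : Aᶜᶜ = A := compl_compl A
        have hg1 : 0 ≤ gval tl hd a b r (I ∪ A) := by
          apply ih (Finset.card B) ?_ (I ∪ A) (by rw [hIAc]) ?_ hIAfc
          · obtain ⟨x, hx⟩ := hAne
            have : 0 < Finset.card A := Finset.card_pos.2 ⟨x, hx⟩
            omega
          · obtain ⟨i, hi⟩ := hne
            exact ⟨i, Finset.mem_union_left _ hi⟩
        have hg2 : 0 ≤ gval tl hd a b r Aᶜ := by
          apply ih (Finset.card A) ?_ Aᶜ (by rw [hAcc]) ?_ hAcfc
          · obtain ⟨x, hx⟩ := hBne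
            have : 0 < Finset.card B := Finset.card_pos.2 ⟨x, hx⟩
            omega
          · obtain ⟨i, hi⟩ := hne
            exact ⟨i, Finset.mem_compl.2 (Finset.disjoint_left.1 hIA hi)⟩
        rw [hsplit]
        linarith

/-- Claim B: all cuts have nonnegative excess. -/
lemma claimB (hG : G.Connected)
    (hadjD : ∀ e, tl e ≠ hd e → G.Adj (tl e) (hd e))
    (hsum : ∑ i, r i = 0)
    (H : ∀ I : Finset V, I.Nonempty → I ≠ Finset.univ → fconn G I → fconn G Iᶜ →
      0 ≤ gval tl hd a b r I) :
    ∀ S : Finset V, 0 ≤ gval tl hd a b r S := by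
  have hmain : ∀ (m : ℕ) (S : Finset V), S.card = m → 0 ≤ gval tl hd a b r S := by
    intro m
    induction m using Nat.strong_induction_on with
    | _ m ih =>
      intro S hcard
      rcases Finset.eq_empty_or_nonempty S with h | hne
      · rw [h, gval_empty]
      · by_cases hfc : fconn G S
        · exact claimA G tl hd a b r hG hadjD hsum H Sᶜ.card S rfl hne hfc
        · obtain ⟨A, B, hAne, hBne, hABdisj, hABunion, hAfc, hnoedge⟩ :=
            fconn_of_not_fconn_exists_split hne hfc
          have harcAB : ∀ e, ¬ (tl e ∈ A ∧ hd e ∈ B) := by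
            rintro e ⟨h1, h2⟩
            have hne' : tl e ≠ hd e := fun h =>
              Finset.disjoint_left.1 hABdisj h1 (h ▸ h2)
            exact hnoedge _ h1 _ h2 (hadjD e hne')
          have harcBA : ∀ e, ¬ (tl e ∈ B ∧ hd e ∈ A) := by
            rintro e ⟨h1, h2⟩
            have hne' : tl e ≠ hd e := fun h =>
              Finset.disjoint_left.1 hABdisj h2 (h ▸ h1)
            exact hnoedge _ h2 _ h1 ((hadjD e hne').symm)
          have hadd := gval_add tl hd a b r hABdisj harcAB harcBA
          rw [hABunion] at hadd
          have hg1 : 0 ≤ gval tl hd a b r A :=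
            claimA G tl hd a b r hG hadjD hsum H Aᶜ.card A rfl hAne hAfc
          have hg2 : 0 ≤ gval tl hd a b r B := by
            apply ih B.card ?_ B rfl
            have := Finset.card_union_of_disjoint hABdisj
            rw [hABunion] at this
            have hApos : 0 < A.card := Finset.card_pos.2 hAne
            omega
          rw [hadd]
          linarith
  exact fun S => hmain S.card S rfl

end Reduction

end OLandau


open OLandau

/-- **Theorem 4.8**: for a connected oriented graph `D` on `{1,…,n}` and integers
`r_i`, `a_e ≤ b_e`, there exist integers `a_e ≤ x_e ≤ b_e` with
`∑ r_i f_i = ∑ x_e w(e)` iff conditions (1) and (2) hold. -/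
theorem oriented_landau {n : ℕ} (D : Fin n → Fin n → Prop)
    (hloop : ∀ i, ¬ D i i) (hmult : ∀ i j, D i j → ¬ D j i)
    (hconn : (SimpleGraph.fromRel D).Connected)
    (r : Fin n → ℤ) (a b : {p : Fin n × Fin n // D p.1 p.2} → ℤ) (hab : ∀ e, a e ≤ b e) :
    (∃ x : {p : Fin n × Fin n // D p.1 p.2} → ℤ, (∀ e, a e ≤ x e ∧ x e ≤ b e) ∧
        r = ∑ e : {p : Fin n × Fin n // D p.1 p.2}, x e • arcVecZ e.1.1 e.1.2) ↔
      ((∑ i, r i) = 0 ∧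
        ∀ I : Finset (Fin n), I.Nonempty → I ≠ Finset.univ →
          ((SimpleGraph.fromRel D).induce (I : Set (Fin n))).Connected →
          ((SimpleGraph.fromRel D).induce ((I : Set (Fin n))ᶜ)).Connected →
          ∑ i ∈ I, r i ≤
            (∑ e : {p : Fin n × Fin n // D p.1 p.2},
              if e.1.1 ∈ I ∧ e.1.2 ∉ I then b e else 0) -
            (∑ e : {p : Fin n × Fin n // D p.1 p.2},
              if e.1.1 ∉ I ∧ e.1.2 ∈ I then a e else 0)) := by
  classical
  let tl : {p : Fin n × Fin n // D p.1 p.2} → Fin n := fun e => e.1.1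
  let hd : {p : Fin n × Fin n // D p.1 p.2} → Fin n := fun e => e.1.2
  let G := SimpleGraph.fromRel D
  -- evaluation of the arc-vector sum
  have keyval : ∀ (x : {p : Fin n × Fin n // D p.1 p.2} → ℤ) (k : Fin n),
      (∑ e : {p : Fin n × Fin n // D p.1 p.2}, x e • arcVecZ (tl e) (hd e)) k = divg tl hd x k := by
    intro x k
    rw [Finset.sum_apply]
    unfold divg
    refine Finset.sum_congr rfl fun e _ => ?_
    have hfac : ∀ (c : Fin n), x e * (if k = c then (1:ℤ) else 0) = (if c = k then x e else 0) := by
      intro c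
      by_cases h : c = k
      · subst h; simp
      · rw [if_neg h, if_neg (fun hh => h hh.symm), mul_zero]
    simp only [Pi.smul_apply, smul_eq_mul, arcVecZ, mul_sub, hfac]
  -- the statement's cut bound equals `cutVal`
  have cutshape : ∀ I : Finset (Fin n),
      (∑ e : {p : Fin n × Fin n // D p.1 p.2}, if tl e ∈ I ∧ hd e ∉ I then b e else 0) -
      (∑ e : {p : Fin n × Fin n // D p.1 p.2}, if tl e ∉ I ∧ hd e ∈ I then a e else 0) = cutVal tl hd a b I := by
    intro I
    unfold cutVal
    rw [Finset.sum_sub_distrib]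
  have hadjD : ∀ e : {p : Fin n × Fin n // D p.1 p.2}, tl e ≠ hd e → G.Adj (tl e) (hd e) := by
    intro e hne
    rw [SimpleGraph.fromRel_adj]
    exact ⟨hne, Or.inl e.2⟩
  constructor
  · rintro ⟨x, hx, heq⟩
    have hdiv : ∀ k, r k = divg tl hd x k := by
      intro k
      rw [heq]
      exact keyval x k
    have hdivsum : ∑ i, r i = 0 := by
      rw [Finset.sum_congr rfl (fun k _ => hdiv k), sum_divg, cutVal_univ]
    refine ⟨hdivsum, fun I hne huniv _ _ => ?_⟩
    rw [cutshape]
    have h1 : ∑ i ∈ I, r i = cutVal tl hd x x I := by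
      rw [Finset.sum_congr rfl (fun k _ => hdiv k), sum_divg]
    rw [h1]
    unfold cutVal
    refine Finset.sum_le_sum fun e _ => ?_
    have h2 := hx e
    split_ifs <;> omega
  · rintro ⟨hsum, H⟩
    -- translate H to a statement about gval
    have H' : ∀ I : Finset (Fin n), I.Nonempty → I ≠ Finset.univ → fconn G I → fconn G Iᶜ →
        0 ≤ gval tl hd a b r I := by
      intro I hne huniv h1 h2
      have h1' := (fconn_iff_induce_connected G I).1 h1
      have h2' := (fconn_iff_induce_connected G Iᶜ).1 h2
      rw [Finset.coe_compl] at h2'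
      have := H I hne huniv h1' h2'
      rw [cutshape] at this
      unfold gval
      linarith
    have hcut : ∀ S : Finset (Fin n), ∑ i ∈ S, r i ≤ cutVal tl hd a b S := by
      intro S
      have := claimB G tl hd a b r hconn hadjD hsum H' S
      unfold gval at this
      linarith
    have hNsum : (∑ e : {p : Fin n × Fin n // D p.1 p.2}, (b e - a e)) = ((∑ e : {p : Fin n × Fin n // D p.1 p.2}, (b e - a e)).toNat : ℤ) := by
      rw [Int.toNat_of_nonneg]
      exact Finset.sum_nonneg fun e _ => by linarith [hab e]
    obtain ⟨x, hx, hdiv⟩ :=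
      hoffman tl hd r (∑ e : {p : Fin n × Fin n // D p.1 p.2}, (b e - a e)).toNat a b hab hNsum hsum hcut
    refine ⟨x, hx, ?_⟩
    funext k
    rw [hdiv k, ← keyval x k]
end
end

section
/- A nonincreasing sequence (d_1,...,d_n) of integers is a signed graphical sequence if and only if: (1) d_1 + ⋯ + d_n = 0; and (2) for every natural number l with 1 ≤ l ≤ n, one has Σ_{i=1}^l d_i ≤ l(n−l). -/
open scoped Classical

noncomputable section

namespace SGaux

variable {n : ℕ}


/-- Decrease entry `(a,b)` by 1 and increase entry `(b,a)` by 1. -/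
def adjust (A : Fin n → Fin n → ℤ) (a b : Fin n) : Fin n → Fin n → ℤ :=
  fun x y => if x = a ∧ y = b then A x y - 1 else if x = b ∧ y = a then A x y + 1 else A x y

lemma adjust_apply (A : Fin n → Fin n → ℤ) {a b : Fin n} (hab : a ≠ b) (x y : Fin n) :
    adjust A a b x y = A x y + (if x = a ∧ y = b then -1 else 0)
      + (if x = b ∧ y = a then 1 else 0) := by
  unfold adjust
  split_ifs with h1 h2 h2
  · exact absurd (h1.1.symm.trans h2.1) hab
  · ring
  · ring
  · ring

lemma adjust_anti {A : Fin n → Fin n → ℤ} (hA : ∀ i j, A j i = - A i j)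
    {a b : Fin n} (hab : a ≠ b) : ∀ i j, adjust A a b j i = - adjust A a b i j := by
  intro i j
  simp only [adjust, hA i j]
  split_ifs with h1 h2 h3 h4 h5 h6 h7 h8 h9 h10 <;> clear hA
  all_goals try ring
  all_goals try tauto
  all_goals simp_all

lemma adjust_rowsum (A : Fin n → Fin n → ℤ) {a b : Fin n} (hab : a ≠ b) (x : Fin n) :
    ∑ y, adjust A a b x y = (∑ y, A x y) + (if x = a then -1 else 0)
      + (if x = b then 1 else 0) := by
  have h1 : ∀ y : Fin n, adjust A a b x y = A x y + (if x = a ∧ y = b then -1 else 0)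
      + (if x = b ∧ y = a then 1 else 0) := adjust_apply A hab x
  rw [Finset.sum_congr rfl fun y _ => h1 y, Finset.sum_add_distrib, Finset.sum_add_distrib]
  congr 1
  · congr 1
    by_cases hx : x = a
    · simp only [hx, true_and]
      rw [Finset.sum_ite_eq' Finset.univ b (fun _ => (-1 : ℤ))]
      simp
    · simp [hx]
  · by_cases hx : x = b
    · simp only [hx, true_and]
      rw [Finset.sum_ite_eq' Finset.univ a (fun _ => (1 : ℤ))]
      simp
    · simp [hx]


lemma adjust_off (A : Fin n → Fin n → ℤ) {a b : Fin n} (hab : a ≠ b) (x y : Fin n)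
    (h1 : ¬(x = a ∧ y = b)) (h2 : ¬(x = b ∧ y = a)) : adjust A a b x y = A x y := by
  rw [adjust_apply A hab, if_neg h1, if_neg h2]
  ring

lemma adjust_bd {A : Fin n → Fin n → ℤ} (hanti : ∀ i j, A j i = - A i j)
    {a b : Fin n} (hab : a ≠ b) (hbd : ∀ x y, -1 ≤ A x y ∧ A x y ≤ 1)
    (ha : 0 ≤ A a b) : ∀ x y, -1 ≤ adjust A a b x y ∧ adjust A a b x y ≤ 1 := by
  intro x y
  have hb1 := (hbd x y).1
  have hb2 := (hbd x y).2
  unfold adjust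
  split_ifs with c1 c2
  · obtain ⟨rfl, rfl⟩ := c1
    constructor <;> linarith
  · obtain ⟨rfl, rfl⟩ := c2
    have hba : A x y = - A y x := hanti y x
    have hya1 := (hbd y x).1
    have hya2 := (hbd y x).2
    constructor <;> linarith
  · constructor <;> linarith

def Real' (d : Fin n → ℤ) : Prop :=
  ∃ A : Fin n → Fin n → ℤ, (∀ i j, A j i = - A i j) ∧
    (∀ i j, -1 ≤ A i j ∧ A i j ≤ 1) ∧ (∀ i, d i = ∑ j, A i j)

lemma transfer {e d : Fin n → ℤ} {i j : Fin n} (hij : i ≠ j)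
    (h2 : e j + 2 ≤ e i) (hdi : d i = e i - 1) (hdj : d j = e j + 1)
    (hrest : ∀ k, k ≠ i → k ≠ j → d k = e k) (hre : Real' e) : Real' d := by
  obtain ⟨A, hanti, hbd, hsum⟩ := hre
  have hAzero : ∀ x, A x x = 0 := fun x => by have := hanti x x; linarith
  by_cases hc : A i j = 1
  · refine ⟨adjust A i j, adjust_anti hanti hij,
      adjust_bd hanti hij hbd (by linarith), ?_⟩
    intro x
    rw [adjust_rowsum A hij]
    by_cases hx1 : x = i
    · rw [hx1, hdi, if_pos rfl, if_neg hij]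
      linarith [hsum i]
    · by_cases hx2 : x = j
      · rw [hx2, hdj, if_pos rfl, if_neg (Ne.symm hij)]
        linarith [hsum j]
      · rw [hrest x hx1 hx2, if_neg hx1, if_neg hx2]
        linarith [hsum x]
  · -- A i j ≤ 0; find a third vertex k
    have hij0 : A i j ≤ 0 := by have := hbd i j; omega
    have hkey : ∑ k ∈ Finset.univ \ {i, j}, (A i k - A j k) = (e i - e j) - 2 * A i j := by
      have hfull : ∑ k, (A i k - A j k) = e i - e j := by
        rw [Finset.sum_sub_distrib, ← hsum i, ← hsum j]
      have hsubset : ({i, j} : Finset (Fin n)) ⊆ Finset.univ := Finset.subset_univ _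
      rw [← Finset.sum_sdiff hsubset] at hfull
      have hpair : ∑ k ∈ ({i, j} : Finset (Fin n)), (A i k - A j k) = 2 * A i j := by
        rw [Finset.sum_pair hij, hAzero i, hAzero j, hanti j i]
        ring
      rw [hpair] at hfull
      linarith
    have hex : ∃ k ∈ Finset.univ \ ({i, j} : Finset (Fin n)), 0 < A i k - A j k := by
      by_contra hcon
      push_neg at hcon
      have : ∑ k ∈ Finset.univ \ ({i, j} : Finset (Fin n)), (A i k - A j k) ≤ 0 :=
        Finset.sum_nonpos hcon
      omega
    obtain ⟨k, hkmem, hk⟩ := hex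
    simp only [Finset.mem_sdiff, Finset.mem_univ, Finset.mem_insert,
      Finset.mem_singleton, true_and] at hkmem
    push_neg at hkmem
    obtain ⟨hki, hkj⟩ := hkmem
    have hbik := hbd i k
    have hbjk := hbd j k
    have hik : 0 ≤ A i k := by omega
    set A1 := adjust A i k with hA1
    have hanti1 : ∀ x y, A1 y x = - A1 x y := adjust_anti hanti (Ne.symm hki)
    have hbd1 : ∀ x y, -1 ≤ A1 x y ∧ A1 x y ≤ 1 :=
      adjust_bd hanti (Ne.symm hki) hbd hik
    have hA1kj : A1 k j = A k j := by
      refine adjust_off A (Ne.symm hki) k j ?_ ?_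
      · rintro ⟨rfl, -⟩; exact hki rfl
      · rintro ⟨-, rfl⟩; exact hij rfl
    have hA1kj0 : 0 ≤ A1 k j := by
      rw [hA1kj, hanti j k]
      omega
    refine ⟨adjust A1 k j, adjust_anti hanti1 hkj, adjust_bd hanti1 hkj hbd1 hA1kj0, ?_⟩
    intro x
    rw [adjust_rowsum A1 hkj, adjust_rowsum A (Ne.symm hki)]
    by_cases hx1 : x = i
    · rw [hx1, hdi, if_pos rfl, if_neg (Ne.symm hki), if_neg (Ne.symm hki), if_neg hij]
      linarith [hsum i]
    · by_cases hx2 : x = j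
      · rw [hx2, hdj, if_neg (Ne.symm hij), if_neg (Ne.symm hkj), if_neg (Ne.symm hkj),
          if_pos rfl]
        linarith [hsum j]
      · by_cases hx3 : x = k
        · rw [hx3, hrest k hki hkj, if_neg hki, if_pos rfl, if_pos rfl, if_neg hkj]
          linarith [hsum k]
        · rw [hrest x hx1 hx2, if_neg hx1, if_neg hx3, if_neg hx3, if_neg hx2]
          linarith [hsum x]


lemma stair_real : Real' (fun i : Fin n => (n : ℤ) - 1 - 2 * (i : ℕ)) := by
  refine ⟨fun x y => (if x < y then 1 else 0) - (if y < x then 1 else 0), ?_, ?_, ?_⟩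
  · intro i j
    simp only
    rcases lt_trichotomy i j with h | h | h
    · rw [if_pos h, if_neg (asymm h)]
      ring
    · subst h
      rw [if_neg (lt_irrefl i)]
      ring
    · rw [if_pos h, if_neg (asymm h)]
      ring
  · intro i j
    simp only
    split_ifs <;> norm_num
  · intro i
    rw [Finset.sum_sub_distrib]
    rw [Finset.sum_boole, Finset.sum_boole]
    have h1 : (Finset.univ.filter fun j : Fin n => i < j) = Finset.Ioi i := by
      ext x; simp
    have h2 : (Finset.univ.filter fun j : Fin n => j < i) = Finset.Iio i := by
      ext x; simp
    rw [h1, h2, Fin.card_Ioi, Fin.card_Iio]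
    have hi : (i : ℕ) < n := i.isLt
    push_cast
    omega


def P (d : Fin n → ℤ) (l : ℕ) : ℤ :=
  ∑ i ∈ Finset.univ.filter (fun i : Fin n => (i : ℕ) < l), d i

def B (n l : ℕ) : ℤ := (l : ℤ) * ((n : ℤ) - (l : ℤ))

def Phi (d : Fin n → ℤ) : ℤ := ∑ l ∈ Finset.range (n+1), (B n l - P d l)

lemma P_zero (d : Fin n → ℤ) : P d 0 = 0 := by simp [P]

lemma P_succ (d : Fin n → ℤ) {l : ℕ} (hl : l < n) :
    P d (l+1) = P d l + d ⟨l, hl⟩ := by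
  unfold P
  rw [show (Finset.univ.filter fun i : Fin n => (i : ℕ) < l + 1)
      = insert ⟨l, hl⟩ (Finset.univ.filter fun i : Fin n => (i : ℕ) < l) by
    ext i
    simp [Fin.ext_iff]
    omega]
  rw [Finset.sum_insert (by simp)]
  ring

lemma P_of_le (d : Fin n → ℤ) {l : ℕ} (hl : n ≤ l) : P d l = ∑ i, d i := by
  unfold P
  congr 1
  ext i
  simpa using lt_of_lt_of_le i.isLt hl

lemma Bdiff (l : ℕ) : B n (l+1) - B n l = (n : ℤ) - 2 * l - 1 := by
  unfold B; push_cast; ring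

/-- adjacent antitone implies antitone -/
lemma antitone_of_adjacent {f : Fin n → ℤ}
    (h : ∀ (x : Fin n) (hx : (x : ℕ) + 1 < n), f ⟨(x : ℕ) + 1, hx⟩ ≤ f x) :
    ∀ i j : Fin n, i ≤ j → f j ≤ f i := by
  have key : ∀ (m : ℕ) (i : Fin n) (hm : (i : ℕ) + m < n), f ⟨(i : ℕ) + m, hm⟩ ≤ f i := by
    intro m
    induction m with
    | zero => intro i hm; simp
    | succ m ih =>
      intro i hm
      have h1 : (i : ℕ) + m < n := by omega
      calc f ⟨(i : ℕ) + (m+1), hm⟩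
          = f ⟨((⟨(i : ℕ) + m, h1⟩ : Fin n) : ℕ) + 1, by omega⟩ := by
            congr 1
          _ ≤ f ⟨(i : ℕ) + m, h1⟩ := h ⟨(i : ℕ) + m, h1⟩ (by omega)
          _ ≤ f i := ih i h1
  intro i j hij
  have hj : (j : ℕ) = (i : ℕ) + ((j : ℕ) - (i : ℕ)) := by
    have := hij; omega
  have := key ((j : ℕ) - (i : ℕ)) i (by omega)
  convert this using 2
  · exact Fin.ext hj

lemma sum_indicator (d : Fin n → ℤ) {v : ℕ} (hv : v < n) (s : Finset (Fin n)) :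
    ∑ x ∈ s, (if (x : ℕ) = v then (1:ℤ) else 0)
      = if (⟨v, hv⟩ : Fin n) ∈ s then 1 else 0 := by
  have h1 : ∀ x ∈ s, (if (x : ℕ) = v then (1:ℤ) else 0)
      = (if x = ⟨v, hv⟩ then 1 else 0) := fun x _ => by
    simp only [show ((x : ℕ) = v) ↔ (x = ⟨v, hv⟩) from ⟨fun h => Fin.ext h,
      fun h => by rw [h]⟩]
  rw [Finset.sum_congr rfl h1]
  exact Finset.sum_ite_eq' s (⟨v, hv⟩ : Fin n) (fun _ => (1:ℤ))

lemma P_shift (d : Fin n → ℤ) {v w : ℕ} (hv : v < n) (hw : w < n) (l : ℕ) :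
    P (fun x => d x + (if (x : ℕ) = v then 1 else 0) - (if (x : ℕ) = w then 1 else 0)) l
      = P d l + (if v < l then 1 else 0) - (if w < l then 1 else 0) := by
  unfold P
  rw [Finset.sum_sub_distrib, Finset.sum_add_distrib,
    sum_indicator d hv, sum_indicator d hw]
  congr 2 <;> · simp [Finset.mem_filter]

lemma sum_shift (d : Fin n → ℤ) {v w : ℕ} (hv : v < n) (hw : w < n) :
    ∑ x, (fun x : Fin n => d x + (if (x : ℕ) = v then 1 else 0)
      - (if (x : ℕ) = w then 1 else 0)) x = ∑ x, d x := by
  rw [Finset.sum_sub_distrib, Finset.sum_add_distrib,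
    sum_indicator d hv, sum_indicator d hw]
  simp

lemma step (d : Fin n → ℤ)
    (hmono : ∀ i j : Fin n, i ≤ j → d j ≤ d i)
    (hsum : ∑ i, d i = 0)
    (hcond : ∀ l, l ≤ n → P d l ≤ B n l)
    (hne : ∃ l, l ≤ n ∧ P d l < B n l) :
    ∃ e : Fin n → ℤ, (∀ i j : Fin n, i ≤ j → e j ≤ e i) ∧ (∑ i, e i = 0) ∧
      (∀ l, l ≤ n → P e l ≤ B n l) ∧ Phi e < Phi d ∧ (Real' e → Real' d) := by
  classical
  -- i0 : least prefix length with strict inequality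
  have hQ : ∃ l, l ≤ n ∧ P d l < B n l := hne
  set i0 := Nat.find hQ with hi0def
  obtain ⟨hi0n, hi0lt⟩ : i0 ≤ n ∧ P d i0 < B n i0 := Nat.find_spec hQ
  have tight : ∀ l, l < i0 → l ≤ n → P d l = B n l := by
    intro l hl hln
    have := Nat.find_min hQ hl
    push_neg at this
    exact le_antisymm (hcond l hln) (this hln)
  have hBn : B n n = 0 := by unfold B; ring
  have hPn : P d n = 0 := by rw [P_of_le d le_rfl, hsum]
  have hi0pos : 1 ≤ i0 := by
    rcases Nat.eq_zero_or_pos i0 with h | h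
    · rw [h] at hi0lt
      rw [P_zero] at hi0lt
      unfold B at hi0lt
      simp at hi0lt
    · exact h
  have hi0n' : i0 < n := by
    rcases lt_or_eq_of_le hi0n with h | h
    · exact h
    · rw [h, hPn, hBn] at hi0lt
      omega
  -- t : least tight prefix length ≥ i0
  have hT : ∃ l, i0 ≤ l ∧ l ≤ n ∧ P d l = B n l :=
    ⟨n, le_of_lt hi0n', le_rfl, by rw [hPn, hBn]⟩
  set t := Nat.find hT with htdef
  obtain ⟨hti0, htn, htight⟩ : i0 ≤ t ∧ t ≤ n ∧ P d t = B n t := Nat.find_spec hT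
  have hstrict : ∀ l, i0 ≤ l → l < t → P d l < B n l := by
    intro l h1 h2
    have h3 := Nat.find_min hT h2
    push_neg at h3
    have hln : l ≤ n := le_trans (le_of_lt h2) htn
    exact lt_of_le_of_ne (hcond l hln) (h3 h1 hln)
  have hi0t : i0 < t := by
    rcases lt_or_eq_of_le hti0 with h | h
    · exact h
    · rw [← h] at htight
      omega
  set v := i0 - 1 with hvdef
  set w := t - 1 with hwdef
  have hvw : v < w := by omega
  have hv : v < n := by omega
  have hw : w < n := by omega
  -- key values of d, in ℕ-indexed form
  set D : ℕ → ℤ := fun u => if hu : u < n then d ⟨u, hu⟩ else 0 with hDdef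
  have hDd : ∀ (u : ℕ) (hu : u < n), D u = d ⟨u, hu⟩ := fun u hu => dif_pos hu
  have hPv : P d v = B n v := tight v (by omega) (by omega)
  have hdv : D v ≤ (n : ℤ) - 2 * v - 2 := by
    rw [hDd v hv]
    have h1 := P_succ d hv
    have hPsv : P d (v+1) = P d i0 := by rw [show v + 1 = i0 by omega]
    rw [hPsv] at h1
    have h2 : B n (v+1) - B n v = (n : ℤ) - 2 * v - 1 := Bdiff v
    have h3 : B n i0 = B n (v+1) := by rw [show v + 1 = i0 by omega]
    rw [h3] at hi0lt
    omega
  have hdu : ∀ (u : ℕ), u < v → D u = (n : ℤ) - 2 * u - 1 := by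
    intro u hu
    rw [hDd u (by omega)]
    have h1 := P_succ d (show u < n by omega)
    have h2 : P d u = B n u := tight u (by omega) (by omega)
    have h3 : P d (u+1) = B n (u+1) := tight (u+1) (by omega) (by omega)
    have h4 := Bdiff (n := n) u
    omega
  have hdw : (n : ℤ) - 2 * w - 1 ≤ D w := by
    rw [hDd w hw]
    have h1 := P_succ d hw
    have h2 : w + 1 = t := by omega
    rw [h2] at h1
    have h3 : P d w ≤ B n w := hcond w (by omega)
    have h4 : B n t - B n w = (n : ℤ) - 2 * w - 1 := by
      rw [← h2]; exact Bdiff w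
    omega
  have hdw1 : w + 1 < n → D (w + 1) ≤ (n : ℤ) - 2 * w - 3 := by
    intro hw1
    rw [hDd (w+1) hw1]
    have h1 := P_succ d hw1
    have h2 : w + 1 = t := by omega
    have h3 : P d (w + 1 + 1) ≤ B n (w+1+1) := hcond (w+1+1) (by omega)
    have h4 : P d (w+1) = B n (w+1) := by rw [h2]; exact htight
    have h5 := Bdiff (n := n) (w+1)
    have h6 := Bdiff (n := n) w
    omega
  have hDadj : ∀ (u : ℕ), u + 1 < n → D (u+1) ≤ D u := by
    intro u hu
    rw [hDd (u+1) hu, hDd u (by omega)]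
    exact hmono ⟨u, by omega⟩ ⟨u+1, hu⟩ (by simp [Fin.le_def])
  -- the new sequence e
  set e : Fin n → ℤ := fun x => d x + (if (x : ℕ) = v then 1 else 0)
      - (if (x : ℕ) = w then 1 else 0) with hedef
  set E : ℕ → ℤ := fun u => if hu : u < n then e ⟨u, hu⟩ else 0 with hEdef
  have hEe : ∀ (u : ℕ) (hu : u < n), E u = e ⟨u, hu⟩ := fun u hu => dif_pos hu
  have hED : ∀ u : ℕ, E u = D u + (if u = v then 1 else 0) - (if u = w then 1 else 0) := by
    intro u
    by_cases hu : u < n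
    · rw [hEe u hu, hDd u hu]
      try simp only [hedef]
    · rw [hEdef, hDdef]
      simp only [dif_neg hu]
      rw [if_neg (by omega), if_neg (by omega)]
      ring
  have hev : e ⟨v, hv⟩ = d ⟨v, hv⟩ + 1 := by
    simp [hedef, show ¬ v = w by omega]
  have hew : e ⟨w, hw⟩ = d ⟨w, hw⟩ - 1 := by
    simp [hedef, show ¬ w = v by omega]
  have heo : ∀ x : Fin n, (x : ℕ) ≠ v → (x : ℕ) ≠ w → e x = d x := by
    intro x h1 h2
    simp only [hedef]
    rw [if_neg h1, if_neg h2]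
    ring
  refine ⟨e, ?_, ?_, ?_, ?_, ?_⟩
  · -- monotonicity of e
    apply antitone_of_adjacent
    intro x hx
    have g1 : e ⟨(x : ℕ) + 1, hx⟩ = E ((x : ℕ) + 1) := (hEe _ hx).symm
    have g2 : e x = E (x : ℕ) := by
      rw [hEe (x : ℕ) x.isLt]
      try congr 1
    rw [g1, g2]
    set u := (x : ℕ) with hudef
    have hu : u + 1 < n := hx
    rw [hED (u+1), hED u]
    by_cases c1 : u + 1 = v
    · have f1 := hdu u (by omega)
      have f2 : D (u+1) ≤ (n : ℤ) - 2 * (v : ℕ) - 2 := by rw [c1]; exact hdv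
      split_ifs <;> omega
    · by_cases c2 : u = v
      · have f1 := hDadj u hu
        split_ifs <;> omega
      · by_cases c4 : u = w
        · have f1 : D (u+1) ≤ (n : ℤ) - 2 * (w:ℕ) - 3 := by
            rw [c4]; exact hdw1 (by omega)
          have f2 : (n : ℤ) - 2 * (w:ℕ) - 1 ≤ D u := by rw [c4]; exact hdw
          split_ifs <;> omega
        · by_cases c5 : u + 1 = w
          · have f1 := hDadj u hu
            split_ifs <;> omega
          · have f1 := hDadj u hu
            split_ifs <;> omega
  · rw [hedef, sum_shift d hv hw, hsum]
  · -- prefix condition for e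
    intro l hl
    rw [hedef, P_shift d hv hw l]
    by_cases c1 : l < i0
    · rw [if_neg (by omega), if_neg (by omega)]
      have := hcond l hl
      omega
    · by_cases c2 : l < t
      · rw [if_pos (by omega), if_neg (by omega)]
        have := hstrict l (by omega) c2
        omega
      · rw [if_pos (by omega), if_pos (by omega)]
        have := hcond l hl
        omega
  · -- Phi decreases
    unfold Phi
    apply Finset.sum_lt_sum
    · intro l hlmem
      have h1 : P d l ≤ P e l := by
        rw [hedef, P_shift d hv hw l]
        by_cases c1 : w < l
        · rw [if_pos (by omega), if_pos c1]
          omega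
        · rw [if_neg c1]
          split_ifs <;> omega
      omega
    · refine ⟨i0, Finset.mem_range.mpr (by omega), ?_⟩
      have h1 : P e i0 = P d i0 + 1 := by
        rw [hedef, P_shift d hv hw i0, if_pos (by omega), if_neg (by omega)]
        ring
      omega
  · -- transfer
    intro hre
    refine transfer (e := e) (i := ⟨v, hv⟩) (j := ⟨w, hw⟩) ?_ ?_ ?_ ?_ ?_ hre
    · intro h
      have : v = w := by injection h
      omega
    · rw [hev, hew]
      have := hmono ⟨v, hv⟩ ⟨w, hw⟩ (by simp [Fin.le_def]; omega)
      omega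
    · rw [hev]; ring
    · rw [hew]; ring
    · intro k h1 h2
      rw [heo k (fun h => h1 (Fin.ext h)) (fun h => h2 (Fin.ext h))]


lemma tight_real (d : Fin n → ℤ) (ht : ∀ l, l ≤ n → P d l = B n l) : Real' d := by
  have hval : ∀ i : Fin n, d i = (n : ℤ) - 1 - 2 * (i : ℕ) := by
    intro i
    have h1 : P d ((i : ℕ) + 1) = P d (i : ℕ) + d i := by
      rw [P_succ d i.isLt]
    have h2 : P d (i : ℕ) = B n (i : ℕ) := ht _ (by omega)
    have h3 : P d ((i : ℕ) + 1) = B n ((i : ℕ) + 1) := ht _ (by have := i.isLt; omega)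
    have h4 := Bdiff (n := n) (i : ℕ)
    omega
  have : d = fun i : Fin n => (n : ℤ) - 1 - 2 * (i : ℕ) := funext hval
  rw [this]
  exact stair_real

lemma realize (N : ℕ) : ∀ d : Fin n → ℤ, (∀ i j : Fin n, i ≤ j → d j ≤ d i) →
    (∑ i, d i = 0) → (∀ l, l ≤ n → P d l ≤ B n l) → Phi d ≤ (N : ℤ) → Real' d := by
  induction N with
  | zero =>
    intro d hm hs hc hp
    have h0 : ∀ l ∈ Finset.range (n+1), 0 ≤ B n l - P d l := by
      intro l hl
      have := hc l (by simpa using Nat.lt_succ_iff.mp (Finset.mem_range.mp hl))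
      omega
    have hz : Phi d = 0 := le_antisymm (by exact_mod_cast hp) (Finset.sum_nonneg h0)
    have htight := (Finset.sum_eq_zero_iff_of_nonneg h0).mp hz
    refine tight_real d fun l hl => ?_
    have := htight l (Finset.mem_range.mpr (by omega))
    omega
  | succ N ih =>
    intro d hm hs hc hp
    by_cases hne : ∃ l, l ≤ n ∧ P d l < B n l
    · obtain ⟨e, he1, he2, he3, he4, he5⟩ := step d hm hs hc hne
      have hPhiE0 : 0 ≤ Phi e := Finset.sum_nonneg (by
        intro l hl
        have := he3 l (by simpa using Nat.lt_succ_iff.mp (Finset.mem_range.mp hl))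
        omega)
      refine he5 (ih e he1 he2 he3 ?_)
      push_cast at hp ⊢
      omega
    · push_neg at hne
      exact tight_real d fun l hl => le_antisymm (hc l hl) (hne l hl)

lemma double_sum_zero {A : Fin n → Fin n → ℤ} (hanti : ∀ i j, A j i = - A i j)
    (S : Finset (Fin n)) : ∑ i ∈ S, ∑ j ∈ S, A i j = 0 := by
  have h1 : ∑ i ∈ S, ∑ j ∈ S, A i j = ∑ j ∈ S, ∑ i ∈ S, A i j := Finset.sum_comm
  have h2 : ∑ j ∈ S, ∑ i ∈ S, A i j = - ∑ i ∈ S, ∑ j ∈ S, A i j := by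
    rw [← Finset.sum_neg_distrib]
    refine Finset.sum_congr rfl fun j _ => ?_
    rw [← Finset.sum_neg_distrib]
    refine Finset.sum_congr rfl fun i _ => ?_
    rw [hanti]
  linarith [h1, h2]

lemma real_to_cond {d : Fin n → ℤ} (h : Real' d) :
    (∑ i, d i = 0) ∧ ∀ l, l ≤ n → P d l ≤ B n l := by
  obtain ⟨A, hanti, hbd, hsum⟩ := h
  constructor
  · rw [Finset.sum_congr rfl fun i _ => hsum i]
    exact double_sum_zero hanti Finset.univ
  · intro l hl
    set S := Finset.univ.filter (fun i : Fin n => (i : ℕ) < l) with hSdef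
    have hScard : S.card = l := by
      rcases eq_or_lt_of_le hl with rfl | hln
      · have : S = Finset.univ := by
          ext x; simp [hSdef, x.isLt]
        rw [this, Finset.card_univ, Fintype.card_fin]
      · have : S = Finset.Iio (⟨l, hln⟩ : Fin n) := by
          ext x; simp [hSdef, Fin.lt_def]
        rw [this, Fin.card_Iio]
    have hsplit : P d l = ∑ i ∈ S, ∑ j ∈ Finset.univ \ S, A i j := by
      unfold P
      rw [Finset.sum_congr rfl fun i _ => hsum i]
      have hsub : S ⊆ Finset.univ := Finset.subset_univ S
      have : ∀ i : Fin n, ∑ j, A i j = ∑ j ∈ Finset.univ \ S, A i j + ∑ j ∈ S, A i j :=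
        fun i => (Finset.sum_sdiff hsub).symm
      rw [Finset.sum_congr rfl fun i _ => this i, Finset.sum_add_distrib,
        double_sum_zero hanti S]
      ring
    have hbound : ∑ i ∈ S, ∑ j ∈ Finset.univ \ S, A i j ≤
        (S.card : ℤ) * ((Finset.univ \ S).card : ℤ) := by
      calc ∑ i ∈ S, ∑ j ∈ Finset.univ \ S, A i j
          ≤ ∑ i ∈ S, ((Finset.univ \ S).card : ℤ) := by
            refine Finset.sum_le_sum fun i _ => ?_
            calc ∑ j ∈ Finset.univ \ S, A i j ≤ ∑ j ∈ Finset.univ \ S, 1 :=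
                  Finset.sum_le_sum fun j _ => (hbd i j).2
              _ = ((Finset.univ \ S).card : ℤ) := by simp
        _ = (S.card : ℤ) * ((Finset.univ \ S).card : ℤ) := by
            rw [Finset.sum_const]
            simp [mul_comm]
    have hcards : ((Finset.univ \ S).card : ℤ) = (n : ℤ) - l := by
      rw [Finset.card_sdiff_of_subset (Finset.subset_univ S), Finset.card_univ, Fintype.card_fin,
        hScard]
      push_cast [Nat.cast_sub hl]
      ring
    rw [hsplit]
    calc ∑ i ∈ S, ∑ j ∈ Finset.univ \ S, A i j
        ≤ (S.card : ℤ) * ((Finset.univ \ S).card : ℤ) := hbound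
      _ = B n l := by rw [hScard, hcards]; rfl

end SGaux

/-- The total degree `d⁰(i) = d⁺(i) - d⁻(i)` of vertex `i` in the oriented graph with
arc relation `R`. -/
def totalDeg {n : ℕ} (R : Fin n → Fin n → Prop) (i : Fin n) : ℤ :=
  ((Finset.univ.filter fun j => R i j).card : ℤ) -
    ((Finset.univ.filter fun j => R j i).card : ℤ)

/-- **Corollary 4.9**: a nonincreasing sequence `(d_1,…,d_n)` of integers is a signed
graphical sequence (i.e. the total-degree sequence of some oriented graph on `n`
vertices) iff `d_1 + ⋯ + d_n = 0` and `∑_{i=1}^l d_i ≤ l (n - l)` for every `1 ≤ l ≤ n`. -/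
theorem signed_graphical_sequence {n : ℕ} (d : Fin n → ℤ)
    (hmono : ∀ i j : Fin n, i ≤ j → d j ≤ d i) :
    (∃ R : Fin n → Fin n → Prop, (∀ i, ¬ R i i) ∧ (∀ i j, R i j → ¬ R j i) ∧
        ∀ i, d i = totalDeg R i) ↔
      ((∑ i, d i) = 0 ∧
        ∀ l : ℕ, 1 ≤ l → l ≤ n →
          ∑ i ∈ Finset.univ.filter (fun i : Fin n => (i : ℕ) < l), d i ≤
            (l : ℤ) * ((n : ℤ) - (l : ℤ))) := by
  constructor
  · rintro ⟨R, hirr, hasym, hdeg⟩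
    have hre : SGaux.Real' d := by
      refine ⟨fun i j => (if R i j then (1:ℤ) else 0) - (if R j i then 1 else 0),
        ?_, ?_, ?_⟩
      · intro i j
        simp only
        ring
      · intro i j
        simp only
        constructor <;> split_ifs <;> norm_num
      · intro i
        rw [hdeg i]
        unfold totalDeg
        simp only
        rw [Finset.sum_sub_distrib, Finset.sum_boole, Finset.sum_boole]
    obtain ⟨hs, hc⟩ := SGaux.real_to_cond hre
    exact ⟨hs, fun l _ h2 => hc l h2⟩
  · rintro ⟨hs, hc⟩
    have hc' : ∀ l, l ≤ n → SGaux.P d l ≤ SGaux.B n l := by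
      intro l hl
      rcases Nat.eq_zero_or_pos l with rfl | hp
      · rw [SGaux.P_zero]
        unfold SGaux.B
        simp
      · exact hc l hp hl
    obtain ⟨A, hanti, hbd, hsum⟩ :=
      SGaux.realize (SGaux.Phi d).toNat d hmono hs hc' (Int.self_le_toNat _)
    refine ⟨fun i j => A i j = 1, ?_, ?_, ?_⟩
    · intro i
      have := hanti i i
      omega
    · intro i j h1 h2
      have := hanti i j
      omega
    · intro i
      unfold totalDeg
      rw [hsum i, ← Finset.sum_boole, ← Finset.sum_boole, ← Finset.sum_sub_distrib]
      refine Finset.sum_congr rfl fun j _ => ?_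
      have hb := hbd i j
      have ha := hanti i j
      split_ifs <;> omega
end
end
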